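/- arXiv:2305.03285 — 2 statements merged into one kernel-verified Lean document; each statement's English description precedes it below -/
import Mathlib

section
/- Let n, m, t be integers with 1 ≤ t ≤ m ≤ n and let B be a set of m-element subsets of Ω = {1,…,n}. Let Aut(B) = {σ in the symmetric group S_n : {σ(b) : b ∈ B} = B}. Then B is a combinatorial t-design (i.e. every t-element subset of Ω is contained in the same number of members of B) if and only if for every k with 1 ≤ k ≤ t and every f ∈ Harm_k that is fixed by the action of every element of Aut(B), one has Σ_{b ∈ B} f̃(b) = 0. -/
open scoped Classical

noncomputable section

open Finset

lemma card_between {α : Type*} [Fintype α] [DecidableEq α] (s u : Finset α) (hsu : s ⊆ u)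
    (k : ℕ) (hk : s.card ≤ k) :
    (Finset.univ.filter (fun z => z.card = k ∧ s ⊆ z ∧ z ⊆ u)).card
      = (u.card - s.card).choose (k - s.card) := by
  rw [← Finset.card_sdiff_of_subset hsu, ← Finset.card_powersetCard]
  apply Finset.card_nbij (fun z => z \ s)
  · intro z hz
    simp only [Finset.mem_coe, mem_filter, mem_univ, true_and] at hz
    obtain ⟨hc, hsz, hzu⟩ := hz
    rw [Finset.mem_coe, Finset.mem_powersetCard]
    exact ⟨Finset.sdiff_subset_sdiff hzu Finset.Subset.rfl,
      by rw [Finset.card_sdiff_of_subset hsz, hc]⟩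
  · intro a ha b hb hab
    simp only [Finset.coe_filter, Set.mem_setOf_eq, mem_univ, true_and] at ha hb
    have : a \ s ∪ s = b \ s ∪ s := by simp only at hab; rw [hab]
    rwa [Finset.sdiff_union_of_subset ha.2.1, Finset.sdiff_union_of_subset hb.2.1] at this
  · intro w hw
    rw [Finset.mem_coe, Finset.mem_powersetCard] at hw
    obtain ⟨hwu, hwc⟩ := hw
    have hdisj : Disjoint s w := (Finset.disjoint_sdiff.mono_right hwu)
    refine ⟨s ∪ w, ?_, ?_⟩
    · simp only [Finset.coe_filter, Set.mem_setOf_eq, mem_univ, true_and]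
      refine ⟨?_, Finset.subset_union_left, Finset.union_subset hsu (hwu.trans Finset.sdiff_subset)⟩
      rw [Finset.card_union_of_disjoint hdisj, hwc, Nat.add_sub_cancel' hk]
    · simp only
      rw [Finset.union_sdiff_cancel_left hdisj]

lemma exchange {n : ℕ} (B : Finset (Finset (Fin n))) (k : ℕ) (f : Finset (Fin n) → ℝ) :
    ∑ b ∈ B, ∑ z ∈ b.powersetCard k, f z
      = ∑ z ∈ Finset.univ.filter (fun z : Finset (Fin n) => z.card = k),
          ((B.filter (fun b => z ⊆ b)).card : ℝ) * f z := by
  have h1 : ∀ b : Finset (Fin n), b.powersetCard k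
      = (Finset.univ.filter (fun z : Finset (Fin n) => z.card = k)).filter (fun z => z ⊆ b) := by
    intro b; ext z
    simp [Finset.mem_powersetCard, and_comm]
  calc ∑ b ∈ B, ∑ z ∈ b.powersetCard k, f z
      = ∑ b ∈ B, ∑ z ∈ Finset.univ.filter (fun z : Finset (Fin n) => z.card = k),
          if z ⊆ b then f z else 0 := by
        refine Finset.sum_congr rfl fun b _ => ?_
        rw [h1 b, Finset.sum_filter]
    _ = ∑ z ∈ Finset.univ.filter (fun z : Finset (Fin n) => z.card = k),
          ∑ b ∈ B, if z ⊆ b then f z else 0 := Finset.sum_comm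
    _ = _ := by
        refine Finset.sum_congr rfl fun z _ => ?_
        rw [← Finset.sum_filter, Finset.sum_const, nsmul_eq_mul]

lemma sumXk_eq_zero {n : ℕ} (k : ℕ) (hk : 1 ≤ k) (f : Finset (Fin n) → ℝ)
    (hharm : ∀ y : Finset (Fin n), y.card = k - 1 →
      ∑ z ∈ Finset.univ.filter (fun z : Finset (Fin n) => z.card = k ∧ y ⊆ z), f z = 0) :
    ∑ z ∈ Finset.univ.filter (fun z : Finset (Fin n) => z.card = k), f z = 0 := by
  have hch : k.choose (k - 1) = k := by
    have h2 : k - (k - 1) = 1 := by omega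
    rw [← Nat.choose_symm (Nat.sub_le k 1), h2, Nat.choose_one_right]
  have key : ∑ y ∈ Finset.univ.filter (fun y : Finset (Fin n) => y.card = k - 1),
      ∑ z ∈ Finset.univ.filter (fun z : Finset (Fin n) => z.card = k ∧ y ⊆ z), f z = 0 := by
    refine Finset.sum_eq_zero fun y hy => ?_
    simp only [mem_filter, mem_univ, true_and] at hy
    exact hharm y hy
  have key2 : ∑ y ∈ Finset.univ.filter (fun y : Finset (Fin n) => y.card = k - 1),
      ∑ z ∈ Finset.univ.filter (fun z : Finset (Fin n) => z.card = k ∧ y ⊆ z), f z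
      = (k : ℝ) * ∑ z ∈ Finset.univ.filter (fun z : Finset (Fin n) => z.card = k), f z := by
    calc ∑ y ∈ Finset.univ.filter (fun y : Finset (Fin n) => y.card = k - 1),
        ∑ z ∈ Finset.univ.filter (fun z : Finset (Fin n) => z.card = k ∧ y ⊆ z), f z
        = ∑ y ∈ Finset.univ.filter (fun y : Finset (Fin n) => y.card = k - 1),
            ∑ z ∈ Finset.univ.filter (fun z : Finset (Fin n) => z.card = k),
              if y ⊆ z then f z else 0 := by
          refine Finset.sum_congr rfl fun y _ => ?_
          rw [Finset.sum_filter, Finset.sum_filter]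
          refine Finset.sum_congr rfl fun z _ => ?_
          by_cases h1 : z.card = k <;> by_cases h2 : y ⊆ z <;> simp [h1, h2]
      _ = ∑ z ∈ Finset.univ.filter (fun z : Finset (Fin n) => z.card = k),
            ∑ y ∈ Finset.univ.filter (fun y : Finset (Fin n) => y.card = k - 1),
              if y ⊆ z then f z else 0 := Finset.sum_comm
      _ = ∑ z ∈ Finset.univ.filter (fun z : Finset (Fin n) => z.card = k), (k : ℝ) * f z := by
          refine Finset.sum_congr rfl fun z hz => ?_
          simp only [mem_filter, mem_univ, true_and] at hz
          rw [← Finset.sum_filter, Finset.sum_const, nsmul_eq_mul]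
          congr 2
          have : (Finset.univ.filter (fun y : Finset (Fin n) => y.card = k - 1)).filter
              (fun y => y ⊆ z) = z.powersetCard (k - 1) := by
            ext y; simp [Finset.mem_powersetCard, and_comm]
          rw [this, Finset.card_powersetCard, hz, hch]
      _ = _ := by rw [Finset.mul_sum]
  rw [key2] at key
  have hk0 : (k : ℝ) ≠ 0 := Nat.cast_ne_zero.mpr (by omega)
  exact (mul_eq_zero.mp key).resolve_left hk0

lemma img_inv {n : ℕ} (σ : Equiv.Perm (Fin n)) (s : Finset (Fin n)) :
    (s.image ⇑σ).image ⇑σ⁻¹ = s := by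
  rw [Finset.image_image]
  have : (⇑σ⁻¹ ∘ ⇑σ) = id := by funext x; simp
  rw [this, Finset.image_id]

lemma img_inv' {n : ℕ} (σ : Equiv.Perm (Fin n)) (s : Finset (Fin n)) :
    (s.image ⇑σ⁻¹).image ⇑σ = s := by
  rw [Finset.image_image]
  have : (⇑σ ∘ ⇑σ⁻¹) = id := by funext x; simp
  rw [this, Finset.image_id]

lemma reindex_filter {n : ℕ} (σ : Equiv.Perm (Fin n)) (k : ℕ) (y : Finset (Fin n))
    (g : Finset (Fin n) → ℝ) :
    ∑ z ∈ Finset.univ.filter (fun z : Finset (Fin n) => z.card = k ∧ y ⊆ z), g (z.image ⇑σ)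
      = ∑ w ∈ Finset.univ.filter (fun w : Finset (Fin n) => w.card = k ∧ y.image ⇑σ ⊆ w), g w := by
  refine Finset.sum_nbij' (fun z => z.image ⇑σ) (fun w => w.image ⇑σ⁻¹) ?_ ?_ ?_ ?_ ?_
  · intro z hz
    simp only [mem_filter, mem_univ, true_and] at hz ⊢
    exact ⟨by rw [Finset.card_image_of_injective _ σ.injective, hz.1],
      Finset.image_subset_image hz.2⟩
  · intro w hw
    simp only [mem_filter, mem_univ, true_and] at hw ⊢
    refine ⟨by rw [Finset.card_image_of_injective _ σ⁻¹.injective, hw.1], ?_⟩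
    have := Finset.image_subset_image (f := ⇑σ⁻¹) hw.2
    rwa [img_inv] at this
  · intro z _; exact img_inv σ z
  · intro w _; exact img_inv' σ w
  · intro z _; rfl

lemma reindex_powerset {n : ℕ} (σ : Equiv.Perm (Fin n)) (k : ℕ) (b : Finset (Fin n))
    (g : Finset (Fin n) → ℝ) :
    ∑ z ∈ b.powersetCard k, g (z.image ⇑σ)
      = ∑ w ∈ (b.image ⇑σ).powersetCard k, g w := by
  refine Finset.sum_nbij' (fun z => z.image ⇑σ) (fun w => w.image ⇑σ⁻¹) ?_ ?_ ?_ ?_ ?_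
  · intro z hz
    rw [Finset.mem_powersetCard] at hz ⊢
    exact ⟨Finset.image_subset_image hz.1,
      by rw [Finset.card_image_of_injective _ σ.injective, hz.2]⟩
  · intro w hw
    rw [Finset.mem_powersetCard] at hw ⊢
    constructor
    · have := Finset.image_subset_image (f := ⇑σ⁻¹) hw.1
      rwa [img_inv] at this
    · rw [Finset.card_image_of_injective _ σ⁻¹.injective, hw.2]
  · intro z _; exact img_inv σ z
  · intro w _; exact img_inv' σ w
  · intro z _; rfl

lemma aut_inv {n : ℕ} (B : Finset (Finset (Fin n))) (σ : Equiv.Perm (Fin n))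
    (h : B.image (fun b => b.image ⇑σ) = B) : B.image (fun b => b.image ⇑σ⁻¹) = B := by
  conv_lhs => rw [← h]
  rw [Finset.image_image]
  have : ((fun b : Finset (Fin n) => b.image ⇑σ⁻¹) ∘ fun b => b.image ⇑σ) = id := by
    funext b; exact img_inv σ b
  rw [this, Finset.image_id]

lemma aut_mul {n : ℕ} (B : Finset (Finset (Fin n))) (σ τ : Equiv.Perm (Fin n))
    (hσ : B.image (fun b => b.image ⇑σ) = B) (hτ : B.image (fun b => b.image ⇑τ) = B) :
    B.image (fun b => b.image ⇑(σ * τ)) = B := by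
  have : (fun b : Finset (Fin n) => b.image ⇑(σ * τ))
      = (fun b : Finset (Fin n) => b.image ⇑σ) ∘ (fun b => b.image ⇑τ) := by
    funext b
    simp only [Function.comp_apply, Finset.image_image]
    rfl
  rw [this, ← Finset.image_image, hτ, hσ]

lemma harm_sum_zero {n t : ℕ} (B : Finset (Finset (Fin n)))
    (H : ∀ k : ℕ, 1 ≤ k → k ≤ t → ∀ f : Finset (Fin n) → ℝ,
        (∀ y : Finset (Fin n), y.card = k - 1 →
          ∑ z ∈ Finset.univ.filter (fun z : Finset (Fin n) => z.card = k ∧ y ⊆ z), f z = 0) →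
        (∀ σ : Equiv.Perm (Fin n), B.image (fun b => b.image σ) = B →
          ∀ z : Finset (Fin n), z.card = k → f (z.image ⇑σ⁻¹) = f z) →
        ∑ b ∈ B, ∑ z ∈ b.powersetCard k, f z = 0)
    (k : ℕ) (hk1 : 1 ≤ k) (hkt : k ≤ t) (f : Finset (Fin n) → ℝ)
    (hharm : ∀ y : Finset (Fin n), y.card = k - 1 →
      ∑ z ∈ Finset.univ.filter (fun z : Finset (Fin n) => z.card = k ∧ y ⊆ z), f z = 0) :
    ∑ b ∈ B, ∑ z ∈ b.powersetCard k, f z = 0 := by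
  set G : Finset (Equiv.Perm (Fin n)) :=
    Finset.univ.filter (fun σ : Equiv.Perm (Fin n) => B.image (fun b => b.image ⇑σ) = B) with hG
  have hmemG : ∀ σ : Equiv.Perm (Fin n), σ ∈ G ↔ B.image (fun b => b.image ⇑σ) = B := by
    intro σ; simp [hG]
  have hone : (1 : Equiv.Perm (Fin n)) ∈ G := by
    rw [hmemG]
    have : (fun b : Finset (Fin n) => b.image ⇑(1 : Equiv.Perm (Fin n))) = id := by
      funext b; simp
    rw [this, Finset.image_id]
  set F : Finset (Fin n) → ℝ := fun z => ∑ σ ∈ G, f (z.image ⇑σ⁻¹) with hF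
  have hFharm : ∀ y : Finset (Fin n), y.card = k - 1 →
      ∑ z ∈ Finset.univ.filter (fun z : Finset (Fin n) => z.card = k ∧ y ⊆ z), F z = 0 := by
    intro y hy
    rw [hF]
    dsimp only
    rw [Finset.sum_comm]
    refine Finset.sum_eq_zero fun σ _ => ?_
    rw [reindex_filter σ⁻¹ k y f]
    exact hharm _ (by rw [Finset.card_image_of_injective _ σ⁻¹.injective, hy])
  have hFinv : ∀ σ : Equiv.Perm (Fin n), B.image (fun b => b.image σ) = B →
      ∀ z : Finset (Fin n), z.card = k → F (z.image ⇑σ⁻¹) = F z := by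
    intro σ hσ z _
    rw [hF]
    dsimp only
    refine Finset.sum_nbij' (fun τ => σ * τ) (fun ρ => σ⁻¹ * ρ) ?_ ?_ ?_ ?_ ?_
    · intro τ hτ
      rw [hmemG] at hτ ⊢
      exact aut_mul B σ τ hσ hτ
    · intro ρ hρ
      rw [hmemG] at hρ ⊢
      exact aut_mul B σ⁻¹ ρ (aut_inv B σ hσ) hρ
    · intro τ _; group
    · intro ρ _; group
    · intro τ _
      have h2 : (⇑τ⁻¹ ∘ ⇑σ⁻¹ : Fin n → Fin n) = ⇑(σ * τ)⁻¹ := by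
        funext x; simp [mul_inv_rev]
      rw [Finset.image_image, h2]
  have hzero := H k hk1 hkt F hFharm hFinv
  have hexp : ∑ b ∈ B, ∑ z ∈ b.powersetCard k, F z
      = G.card • ∑ b ∈ B, ∑ z ∈ b.powersetCard k, f z := by
    calc ∑ b ∈ B, ∑ z ∈ b.powersetCard k, F z
        = ∑ b ∈ B, ∑ σ ∈ G, ∑ z ∈ b.powersetCard k, f (z.image ⇑σ⁻¹) := by
          refine Finset.sum_congr rfl fun b _ => ?_
          rw [hF]; exact Finset.sum_comm
      _ = ∑ σ ∈ G, ∑ b ∈ B, ∑ z ∈ b.powersetCard k, f (z.image ⇑σ⁻¹) := Finset.sum_comm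
      _ = ∑ σ ∈ G, ∑ b ∈ B, ∑ w ∈ (b.image ⇑σ⁻¹).powersetCard k, f w := by
          refine Finset.sum_congr rfl fun σ _ => Finset.sum_congr rfl fun b _ => ?_
          exact reindex_powerset σ⁻¹ k b f
      _ = ∑ σ ∈ G, ∑ b ∈ B, ∑ w ∈ b.powersetCard k, f w := by
          refine Finset.sum_congr rfl fun σ hσ => ?_
          rw [hmemG] at hσ
          have hBimg := aut_inv B σ hσ
          conv_rhs => rw [← hBimg]
          rw [Finset.sum_image]
          intro x _ y _ hxy
          have := congrArg (fun s => Finset.image (⇑σ) s) hxy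
          simpa only [img_inv'] using this
      _ = G.card • ∑ b ∈ B, ∑ w ∈ b.powersetCard k, f w := Finset.sum_const _
  rw [hexp, nsmul_eq_mul] at hzero
  have hGcard : (G.card : ℝ) ≠ 0 :=
    Nat.cast_ne_zero.mpr (Finset.card_ne_zero_of_mem hone)
  exact (mul_eq_zero.mp hzero).resolve_left hGcard

lemma swap_card {α : Type*} [DecidableEq α] (B : Finset (Finset α)) (Z : Finset (Finset α)) :
    ∑ T ∈ Z, (B.filter (fun b => T ⊆ b)).card = ∑ b ∈ B, (Z.filter (fun T => T ⊆ b)).card := by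
  simp_rw [Finset.card_filter]
  exact Finset.sum_comm

lemma card_sup {n : ℕ} (y : Finset (Fin n)) (k : ℕ) (hy : y.card ≤ k) :
    (Finset.univ.filter (fun z : Finset (Fin n) => z.card = k ∧ y ⊆ z)).card
      = (n - y.card).choose (k - y.card) := by
  have h := card_between y Finset.univ (Finset.subset_univ y) k hy
  rw [Finset.card_univ, Fintype.card_fin] at h
  rw [← h]
  congr 1
  ext z
  simp [Finset.subset_univ]

lemma count_between_sets {n : ℕ} (z b : Finset (Fin n)) (k t : ℕ) (hzk : z.card = k)
    (hkt : k ≤ t) :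
    ((Finset.univ.filter (fun T : Finset (Fin n) => T.card = t ∧ z ⊆ T)).filter
        (fun T => T ⊆ b)).card
      = if z ⊆ b then (b.card - k).choose (t - k) else 0 := by
  rw [Finset.filter_filter]
  by_cases hzb : z ⊆ b
  · rw [if_pos hzb]
    have h := card_between z b hzb t (hzk ▸ hkt)
    rw [hzk] at h
    rw [← h]
    congr 1
    ext T
    simp only [Finset.mem_filter, Finset.mem_univ, true_and]
    tauto
  · rw [if_neg hzb]
    rw [Finset.card_eq_zero, Finset.filter_eq_empty_iff]
    rintro T - ⟨⟨-, hzT⟩, hTb⟩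
    exact hzb (hzT.trans hTb)

lemma block_count_constant {n m t : ℕ} (htm : t ≤ m) (hmn : m ≤ n)
    (B : Finset (Finset (Fin n))) (hB : ∀ b ∈ B, b.card = m)
    (H : ∀ k : ℕ, 1 ≤ k → k ≤ t → ∀ f : Finset (Fin n) → ℝ,
        (∀ y : Finset (Fin n), y.card = k - 1 →
          ∑ z ∈ Finset.univ.filter (fun z : Finset (Fin n) => z.card = k ∧ y ⊆ z), f z = 0) →
        (∀ σ : Equiv.Perm (Fin n), B.image (fun b => b.image σ) = B →
          ∀ z : Finset (Fin n), z.card = k → f (z.image ⇑σ⁻¹) = f z) →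
        ∑ b ∈ B, ∑ z ∈ b.powersetCard k, f z = 0) :
    ∀ k : ℕ, k ≤ t → ∃ c : ℝ, ∀ z : Finset (Fin n), z.card = k →
      ((B.filter (fun b => z ⊆ b)).card : ℝ) = c := by
  intro k
  induction k with
  | zero =>
    intro _
    refine ⟨(B.card : ℝ), fun z hz => ?_⟩
    rw [Finset.card_eq_zero] at hz
    subst hz
    rw [Finset.filter_true_of_mem (fun b _ => Finset.empty_subset b)]
  | succ k ih =>
    intro hk
    obtain ⟨c, hc⟩ := ih (by omega)
    have hkn : k < n := by omega
    have hkm : k < m := by omega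
    have hnk : ((n - k : ℕ) : ℝ) ≠ 0 := Nat.cast_ne_zero.mpr (by omega)
    set c' : ℝ := ((m - k : ℕ) : ℝ) * c / ((n - k : ℕ) : ℝ) with hc'
    set f : Finset (Fin n) → ℝ := fun z =>
      if z.card = k + 1 then ((B.filter (fun b => z ⊆ b)).card : ℝ) - c' else 0 with hf
    have hfval : ∀ z : Finset (Fin n), z.card = k + 1 →
        f z = ((B.filter (fun b => z ⊆ b)).card : ℝ) - c' := by
      intro z hz; rw [hf]; simp [hz]
    have hharm : ∀ y : Finset (Fin n), y.card = (k + 1) - 1 →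
        ∑ z ∈ Finset.univ.filter (fun z : Finset (Fin n) => z.card = k + 1 ∧ y ⊆ z), f z
          = 0 := by
      intro y hy
      rw [Nat.add_sub_cancel] at hy
      set Zy := Finset.univ.filter (fun z : Finset (Fin n) => z.card = k + 1 ∧ y ⊆ z) with hZy
      have hZycard : Zy.card = n - k := by
        rw [hZy, card_sup y (k + 1) (by omega), hy]
        have h1 : k + 1 - k = 1 := by omega
        rw [h1, Nat.choose_one_right]
      have hch : (m - k).choose (k + 1 - k) = m - k := by
        have h1 : k + 1 - k = 1 := by omega
        rw [h1, Nat.choose_one_right]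
      have hNsum_nat : ∑ z ∈ Zy, (B.filter (fun b => z ⊆ b)).card
          = (B.filter (fun b => y ⊆ b)).card * (m - k) := by
        rw [hZy, swap_card]
        have step : ∀ b ∈ B,
            ((Finset.univ.filter (fun z : Finset (Fin n) => z.card = k + 1 ∧ y ⊆ z)).filter
              (fun z => z ⊆ b)).card = if y ⊆ b then m - k else 0 := by
          intro b hb
          rw [count_between_sets y b k (k + 1) hy (Nat.le_succ k), hB b hb, hch]
        rw [Finset.sum_congr rfl step, ← Finset.sum_filter, Finset.sum_const, smul_eq_mul]
      have hNsum : ∑ z ∈ Zy, ((B.filter (fun b => z ⊆ b)).card : ℝ)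
          = ((m - k : ℕ) : ℝ) * c := by
        calc ∑ z ∈ Zy, ((B.filter (fun b => z ⊆ b)).card : ℝ)
            = ((∑ z ∈ Zy, (B.filter (fun b => z ⊆ b)).card : ℕ) : ℝ) := by
              rw [Nat.cast_sum]
          _ = (((B.filter (fun b => y ⊆ b)).card * (m - k) : ℕ) : ℝ) := by rw [hNsum_nat]
          _ = ((B.filter (fun b => y ⊆ b)).card : ℝ) * ((m - k : ℕ) : ℝ) := by
              rw [Nat.cast_mul]
          _ = ((m - k : ℕ) : ℝ) * c := by rw [hc y hy]; ring
      calc ∑ z ∈ Zy, f z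
          = ∑ z ∈ Zy, (((B.filter (fun b => z ⊆ b)).card : ℝ) - c') := by
            refine Finset.sum_congr rfl fun z hz => ?_
            rw [hZy, Finset.mem_filter] at hz
            exact hfval z hz.2.1
        _ = (∑ z ∈ Zy, ((B.filter (fun b => z ⊆ b)).card : ℝ)) - Zy.card • c' := by
            rw [Finset.sum_sub_distrib, Finset.sum_const]
        _ = ((m - k : ℕ) : ℝ) * c - ((n - k : ℕ) : ℝ) * c' := by
            rw [hNsum, hZycard, nsmul_eq_mul]
        _ = 0 := by rw [hc']; field_simp; ring
    have hz0 := harm_sum_zero B H (k + 1) (by omega) hk f hharm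
    rw [exchange] at hz0
    have hsumf := sumXk_eq_zero (k + 1) (by omega) f hharm
    set X := Finset.univ.filter (fun z : Finset (Fin n) => z.card = k + 1) with hX
    have hsq : ∑ z ∈ X, f z ^ 2 = 0 := by
      have step : ∀ z ∈ X, f z ^ 2
          = ((B.filter (fun b => z ⊆ b)).card : ℝ) * f z - c' * f z := by
        intro z hz
        rw [hX, Finset.mem_filter] at hz
        rw [hfval z hz.2]
        ring
      rw [Finset.sum_congr rfl step, Finset.sum_sub_distrib, hz0, ← Finset.mul_sum, hsumf]
      ring
    refine ⟨c', fun z hz => ?_⟩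
    have hzX : z ∈ X := by rw [hX, Finset.mem_filter]; exact ⟨Finset.mem_univ z, hz⟩
    have h0 := (Finset.sum_eq_zero_iff_of_nonneg (fun w _ => sq_nonneg (f w))).mp hsq z hzX
    have hfz0 : f z = 0 := by
      have := sq_eq_zero_iff.mp h0
      exact this
    rw [hfval z hz] at hfz0
    linarith

/-- **(Theorem of Awada–Miezaki–Munemasa–Nakasora.)** Let `1 ≤ t ≤ m ≤ n` and let `B` be a
set of `m`-element subsets of `{1, …, n}` with automorphism group
`Aut(B) = {σ ∈ Sₙ | σ(B) = B}`. Then `B` is a combinatorial `t`-design (every `t`-element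
subset of the points lies in the same number `λ` of blocks) if and only if for every
`1 ≤ k ≤ t` and every harmonic function `f` of degree `k` (i.e. `f : X_k → ℝ` with
`(γ f)(y) = ∑_{z ∈ X_k, y ⊆ z} f z = 0` for all `y ∈ X_{k-1}`) that is fixed by every
`σ ∈ Aut(B)` (i.e. `f (σ⁻¹ z) = f z` on `X_k`), one has `∑_{b ∈ B} f̃(b) = 0`, where
`f̃(b) = ∑_{z ∈ X_k, z ⊆ b} f z`. -/
theorem design_iff_invariant_harmonic_sums_vanish (n m t : ℕ)
    (ht1 : 1 ≤ t) (htm : t ≤ m) (hmn : m ≤ n)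
    (B : Finset (Finset (Fin n))) (hB : ∀ b ∈ B, b.card = m) :
    (∃ lam : ℕ, ∀ T : Finset (Fin n), T.card = t →
        (B.filter fun b => T ⊆ b).card = lam) ↔
      (∀ k : ℕ, 1 ≤ k → k ≤ t → ∀ f : Finset (Fin n) → ℝ,
        (∀ y : Finset (Fin n), y.card = k - 1 →
          ∑ z ∈ Finset.univ.filter (fun z : Finset (Fin n) => z.card = k ∧ y ⊆ z), f z = 0) →
        (∀ σ : Equiv.Perm (Fin n), B.image (fun b => b.image σ) = B →
          ∀ z : Finset (Fin n), z.card = k → f (z.image ⇑σ⁻¹) = f z) →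
        ∑ b ∈ B, ∑ z ∈ b.powersetCard k, f z = 0) := by
  constructor
  · rintro ⟨lam, hlam⟩ k hk1 hkt f hharm -
    rw [exchange]
    have hsumf := sumXk_eq_zero k hk1 f hharm
    have key : ∀ z : Finset (Fin n), z.card = k →
        (B.filter (fun b => z ⊆ b)).card * (m - k).choose (t - k)
          = lam * (n - k).choose (t - k) := by
      intro z hz
      have hzt : z.card ≤ t := by omega
      have left : ∑ T ∈ Finset.univ.filter (fun T : Finset (Fin n) => T.card = t ∧ z ⊆ T),
          (B.filter (fun b => T ⊆ b)).card = (n - k).choose (t - k) * lam := by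
        calc ∑ T ∈ Finset.univ.filter (fun T : Finset (Fin n) => T.card = t ∧ z ⊆ T),
            (B.filter (fun b => T ⊆ b)).card
            = ∑ T ∈ Finset.univ.filter (fun T : Finset (Fin n) => T.card = t ∧ z ⊆ T),
              lam := Finset.sum_congr rfl (fun T hT => by
                rw [Finset.mem_filter] at hT
                exact hlam T hT.2.1)
          _ = (Finset.univ.filter
              (fun T : Finset (Fin n) => T.card = t ∧ z ⊆ T)).card * lam := by
              rw [Finset.sum_const, smul_eq_mul]
          _ = (n - k).choose (t - k) * lam := by rw [card_sup z t hzt, hz]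
      have right : ∑ T ∈ Finset.univ.filter (fun T : Finset (Fin n) => T.card = t ∧ z ⊆ T),
          (B.filter (fun b => T ⊆ b)).card
            = (B.filter (fun b => z ⊆ b)).card * (m - k).choose (t - k) := by
        rw [swap_card]
        have step : ∀ b ∈ B,
            ((Finset.univ.filter (fun T : Finset (Fin n) => T.card = t ∧ z ⊆ T)).filter
              (fun T => T ⊆ b)).card = if z ⊆ b then (m - k).choose (t - k) else 0 := by
          intro b hb
          rw [count_between_sets z b k t hz hkt, hB b hb]
        rw [Finset.sum_congr rfl step, ← Finset.sum_filter, Finset.sum_const, smul_eq_mul]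
      exact (right.symm.trans left).trans (Nat.mul_comm _ _)
    have hCm : (((m - k).choose (t - k) : ℕ) : ℝ) ≠ 0 :=
      Nat.cast_ne_zero.mpr (Nat.choose_pos (by omega)).ne'
    have hmain : (∑ z ∈ Finset.univ.filter (fun z : Finset (Fin n) => z.card = k),
        ((B.filter (fun b => z ⊆ b)).card : ℝ) * f z) * (((m - k).choose (t - k) : ℕ) : ℝ)
          = 0 := by
      rw [Finset.sum_mul]
      calc ∑ z ∈ Finset.univ.filter (fun z : Finset (Fin n) => z.card = k),
          ((B.filter (fun b => z ⊆ b)).card : ℝ) * f z * (((m - k).choose (t - k) : ℕ) : ℝ)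
          = ∑ z ∈ Finset.univ.filter (fun z : Finset (Fin n) => z.card = k),
            ((lam : ℝ) * (((n - k).choose (t - k) : ℕ) : ℝ)) * f z := by
            refine Finset.sum_congr rfl fun z hz => ?_
            rw [Finset.mem_filter] at hz
            have hkey := key z hz.2
            have hkey' : ((B.filter (fun b => z ⊆ b)).card : ℝ)
                * (((m - k).choose (t - k) : ℕ) : ℝ)
                = (lam : ℝ) * (((n - k).choose (t - k) : ℕ) : ℝ) := by
              exact_mod_cast congrArg (Nat.cast : ℕ → ℝ) hkey
            rw [← hkey']
            ring
        _ = ((lam : ℝ) * (((n - k).choose (t - k) : ℕ) : ℝ))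
            * ∑ z ∈ Finset.univ.filter (fun z : Finset (Fin n) => z.card = k), f z := by
            rw [Finset.mul_sum]
        _ = 0 := by rw [hsumf, mul_zero]
    exact (mul_eq_zero.mp hmain).resolve_right hCm
  · intro H
    obtain ⟨c, hc⟩ := block_count_constant htm hmn B hB H t le_rfl
    obtain ⟨T₀, -, hT₀⟩ := Finset.exists_subset_card_eq
      (s := (Finset.univ : Finset (Fin n))) (n := t)
      (by rw [Finset.card_univ, Fintype.card_fin]; omega)
    refine ⟨(B.filter (fun b => T₀ ⊆ b)).card, fun T hT => ?_⟩
    have h1 := hc T hT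
    have h2 := hc T₀ hT₀
    exact_mod_cast h1.trans h2.symm
end
end

section
/- Let C be the extended ternary quadratic residue code of length 14. The set of weights of codewords of C, i.e. {wt(c) : c ∈ C}, is exactly {0, 6, 7, 8, 9, 10, 11, 12, 14}. -/
open scoped Classical

noncomputable section

/-- Membership in the ternary quadratic residue code of length 13: the codeword, viewed
as the polynomial `∑ cᵢ Xⁱ` modulo `X ^ 13 - 1`, lies in the ideal generated by the
polynomial whose roots are `α ^ ℓ` for `ℓ` running over the nonzero squares mod 13;
equivalently (as that generator is separable and divides `X ^ 13 - 1`), the codeword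
polynomial vanishes at `α ^ ℓ` for every nonzero square `ℓ` modulo 13. -/
def qr3Mem {K : Type} [Field K] [Algebra (ZMod 3) K] (α : K) (c : Fin 13 → ZMod 3) : Prop :=
  ∀ ℓ : ZMod 13, ℓ ≠ 0 → IsSquare ℓ →
    ∑ i : Fin 13, algebraMap (ZMod 3) K (c i) * α ^ (ℓ.val * (i : ℕ)) = 0

/-- Membership in the extended ternary quadratic residue code of length 14: the first 13
coordinates form a codeword of the quadratic residue code of length 13 and the last
coordinate is minus the sum of the first 13. -/
def extQR3Mem {K : Type} [Field K] [Algebra (ZMod 3) K] (α : K) (c : Fin 14 → ZMod 3) : Prop :=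
  qr3Mem α (fun i => c i.castSucc) ∧ c (Fin.last 13) = - ∑ i : Fin 13, c i.castSucc

/-- Hamming weight: the number of nonzero coordinates. -/
def wt {n : ℕ} {F : Type} [Zero F] (c : Fin n → F) : ℕ :=
  (Finset.univ.filter fun i => c i ≠ 0).card

/-- Support: the set of nonzero coordinate positions. -/
def supp {n : ℕ} {F : Type} [Zero F] (c : Fin n → F) : Finset (Fin n) :=
  Finset.univ.filter fun i => c i ≠ 0


def cwVec (s t : ZMod 3) (a : Fin 7 → ZMod 3) : Fin 13 → ZMod 3 :=
  ![(1 : ZMod 3) * a 0,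
    (-(s+t)) * a 0 + (1 : ZMod 3) * a 1,
    (s*t+s+t) * a 0 + (-(s+t)) * a 1 + (1 : ZMod 3) * a 2,
    (-(s^2+t^2+2)) * a 0 + (s*t+s+t) * a 1 + (-(s+t)) * a 2 + (1 : ZMod 3) * a 3,
    (s*t+s+t) * a 0 + (-(s^2+t^2+2)) * a 1 + (s*t+s+t) * a 2 + (-(s+t)) * a 3 + (1 : ZMod 3) * a 4,
    (-(s+t)) * a 0 + (s*t+s+t) * a 1 + (-(s^2+t^2+2)) * a 2 + (s*t+s+t) * a 3 + (-(s+t)) * a 4 + (1 : ZMod 3) * a 5,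
    (1 : ZMod 3) * a 0 + (-(s+t)) * a 1 + (s*t+s+t) * a 2 + (-(s^2+t^2+2)) * a 3 + (s*t+s+t) * a 4 + (-(s+t)) * a 5 + (1 : ZMod 3) * a 6,
    (1 : ZMod 3) * a 1 + (-(s+t)) * a 2 + (s*t+s+t) * a 3 + (-(s^2+t^2+2)) * a 4 + (s*t+s+t) * a 5 + (-(s+t)) * a 6,
    (1 : ZMod 3) * a 2 + (-(s+t)) * a 3 + (s*t+s+t) * a 4 + (-(s^2+t^2+2)) * a 5 + (s*t+s+t) * a 6,
    (1 : ZMod 3) * a 3 + (-(s+t)) * a 4 + (s*t+s+t) * a 5 + (-(s^2+t^2+2)) * a 6,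
    (1 : ZMod 3) * a 4 + (-(s+t)) * a 5 + (s*t+s+t) * a 6,
    (1 : ZMod 3) * a 5 + (-(s+t)) * a 6,
    (1 : ZMod 3) * a 6]

def FwVec (s t : ZMod 3) (a : Fin 7 → ZMod 3) : Fin 14 → ZMod 3 := fun i =>
  if h : (i : ℕ) < 13 then cwVec s t a ⟨i, h⟩ else - ∑ i : Fin 13, cwVec s t a i

def wt2 {n : ℕ} (c : Fin n → ZMod 3) : ℕ := ∑ i, if c i ≠ 0 then 1 else 0

theorem h3Z : (3 : ZMod 3) = 0 := by decide

theorem wt2_eq (c : Fin 14 → ZMod 3) : wt2 c = (if c 0 ≠ 0 then 1 else 0) + ((if c 1 ≠ 0 then 1 else 0) + ((if c 2 ≠ 0 then 1 else 0) + ((if c 3 ≠ 0 then 1 else 0) + ((if c 4 ≠ 0 then 1 else 0) + ((if c 5 ≠ 0 then 1 else 0) + ((if c 6 ≠ 0 then 1 else 0) + ((if c 7 ≠ 0 then 1 else 0) + ((if c 8 ≠ 0 then 1 else 0) + ((if c 9 ≠ 0 then 1 else 0) + ((if c 10 ≠ 0 then 1 else 0) + ((if c 11 ≠ 0 then 1 else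 0) + ((if c 12 ≠ 0 then 1 else 0) + ((if c 13 ≠ 0 then 1 else 0)))))))))))))) := by
  simp [wt2, Fin.sum_univ_succ]
  try rfl

set_option maxRecDepth 1000000 in
theorem flat12 (a : Fin 7 → ZMod 3) : wt2 (FwVec 1 2 a) = (if ((1 : ZMod 3) * a 0 : ZMod 3) ≠ 0 then 1 else 0) + ((if ((-(1+2)) * a 0 + (1 : ZMod 3) * a 1 : ZMod 3) ≠ 0 then 1 else 0) + ((if ((1*2+1+2) * a 0 + (-(1+2)) * a 1 + (1 : ZMod 3) * a 2 : ZMod 3) ≠ 0 then 1 else 0) + ((if ((-(1^2+2^2+2)) * a 0 + (1*2+1+2) * a 1 + (-(1+2)) * a 2 + (1 : ZMod 3) * a 3 : ZMod 3) ≠ 0 then 1 else 0) + ((if ((1*2+1+2) * a 0 + (-(1^2+2^2+2)) * a 1 + (1*2+1+2) * a 2 + (-(1+2)) * a 3 + (1 : ZMod 3) * a 4 : ZMod 3) ≠ 0 then 1 else 0) + ((if ((-(1+2)) * a 0 + (1*2+1+2) * a 1 + (-(1^2+2^2+2)) * a 2 + (1*2+1+2) * a 3 + (-(1+2)) * a 4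 + (1 : ZMod 3) * a 5 : ZMod 3) ≠ 0 then 1 else 0) + ((if ((1 : ZMod 3) * a 0 + (-(1+2)) * a 1 + (1*2+1+2) * a 2 + (-(1^2+2^2+2)) * a 3 + (1*2+1+2) * a 4 + (-(1+2)) * a 5 + (1 : ZMod 3) * a 6 : ZMod 3) ≠ 0 then 1 else 0) + ((if ((1 : ZMod 3) * a 1 + (-(1+2)) * a 2 + (1*2+1+2) * a 3 + (-(1^2+2^2+2)) * a 4 + (1*2+1+2) * a 5 + (-(1+2)) * a 6 : ZMod 3) ≠ 0 then 1 else 0) + ((if ((1 : ZMod 3) * a 2 + (-(1+2)) * a 3 + (1*2+1+2) * a 4 + (-(1^2+2^2+2)) * a 5 + (1*2+1+2) * a 6 : ZMod 3) ≠ 0 then 1 else 0) + ((if ((1 : ZMod 3) * a 3 + (-(1+2)) * a 4 + (1*2+1+2) * a 5 + (-(1^2+2^2+2)) * a 6 : ZMod 3) ≠ 0 then 1 else 0) + ((if ((1 : ZMod 3) * a 4 + (-(1+2)) * a 5 + (1*2+1+2) * a 6 : ZMod 3) ≠ 0 then 1 else 0) + ((if ((1 : ZMod 3) * a 5 + (-(1+2))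 * a 6 : ZMod 3) ≠ 0 then 1 else 0) + ((if ((1 : ZMod 3) * a 6 : ZMod 3) ≠ 0 then 1 else 0) + ((if (-((1 : ZMod 3) * a 0 + ((-(1+2)) * a 0 + (1 : ZMod 3) * a 1 + ((1*2+1+2) * a 0 + (-(1+2)) * a 1 + (1 : ZMod 3) * a 2 + ((-(1^2+2^2+2)) * a 0 + (1*2+1+2) * a 1 + (-(1+2)) * a 2 + (1 : ZMod 3) * a 3 + ((1*2+1+2) * a 0 + (-(1^2+2^2+2)) * a 1 + (1*2+1+2) * a 2 + (-(1+2)) * a 3 + (1 : ZMod 3) * a 4 + ((-(1+2)) * a 0 + (1*2+1+2) * a 1 + (-(1^2+2^2+2)) * a 2 + (1*2+1+2) * a 3 + (-(1+2)) * a 4 + (1 : ZMod 3) * a 5 + ((1 : ZMod 3) * a 0 + (-(1+2)) * a 1 + (1*2+1+2) * a 2 + (-(1^2+2^2+2)) * a 3 + (1*2+1+2) * a 4 + (-(1+2)) * a 5 + (1 : ZMod 3) * a 6 + ((1 : ZMod 3) * a 1 + (-(1+2)) * a 2 + (1*2+1+2) * a 3 + (-(1^2+2^2+2)) * a 4 +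 (1*2+1+2) * a 5 + (-(1+2)) * a 6 + ((1 : ZMod 3) * a 2 + (-(1+2)) * a 3 + (1*2+1+2) * a 4 + (-(1^2+2^2+2)) * a 5 + (1*2+1+2) * a 6 + ((1 : ZMod 3) * a 3 + (-(1+2)) * a 4 + (1*2+1+2) * a 5 + (-(1^2+2^2+2)) * a 6 + ((1 : ZMod 3) * a 4 + (-(1+2)) * a 5 + (1*2+1+2) * a 6 + ((1 : ZMod 3) * a 5 + (-(1+2)) * a 6 + ((1 : ZMod 3) * a 6 + 0))))))))))))) : ZMod 3) ≠ 0 then 1 else 0)))))))))))))) := by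
  rw [wt2_eq]
  rfl

set_option maxRecDepth 1000000 in
theorem flat02 (a : Fin 7 → ZMod 3) : wt2 (FwVec 0 2 a) = (if ((1 : ZMod 3) * a 0 : ZMod 3) ≠ 0 then 1 else 0) + ((if ((-(0+2)) * a 0 + (1 : ZMod 3) * a 1 : ZMod 3) ≠ 0 then 1 else 0) + ((if ((0*2+0+2) * a 0 + (-(0+2)) * a 1 + (1 : ZMod 3) * a 2 : ZMod 3) ≠ 0 then 1 else 0) + ((if ((-(0^2+2^2+2)) * a 0 + (0*2+0+2) * a 1 + (-(0+2)) * a 2 + (1 : ZMod 3) * a 3 : ZMod 3) ≠ 0 then 1 else 0) + ((if ((0*2+0+2) * a 0 + (-(0^2+2^2+2)) * a 1 + (0*2+0+2) * a 2 + (-(0+2)) * a 3 + (1 : ZMod 3) * a 4 : ZMod 3) ≠ 0 then 1 else 0) + ((if ((-(0+2)) * a 0 + (0*2+0+2) * a 1 + (-(0^2+2^2+2)) * a 2 + (0*2+0+2) * a 3 + (-(0+2)) * a 4 + (1 : ZMod 3) * a 5 : ZMod 3) ≠ 0 then 1 else 0) + ((if ((1 : ZMod 3) * a 0 + (-(0+2))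 * a 1 + (0*2+0+2) * a 2 + (-(0^2+2^2+2)) * a 3 + (0*2+0+2) * a 4 + (-(0+2)) * a 5 + (1 : ZMod 3) * a 6 : ZMod 3) ≠ 0 then 1 else 0) + ((if ((1 : ZMod 3) * a 1 + (-(0+2)) * a 2 + (0*2+0+2) * a 3 + (-(0^2+2^2+2)) * a 4 + (0*2+0+2) * a 5 + (-(0+2)) * a 6 : ZMod 3) ≠ 0 then 1 else 0) + ((if ((1 : ZMod 3) * a 2 + (-(0+2)) * a 3 + (0*2+0+2) * a 4 + (-(0^2+2^2+2)) * a 5 + (0*2+0+2) * a 6 : ZMod 3) ≠ 0 then 1 else 0) + ((if ((1 : ZMod 3) * a 3 + (-(0+2)) * a 4 + (0*2+0+2) * a 5 + (-(0^2+2^2+2)) * a 6 : ZMod 3) ≠ 0 then 1 else 0) + ((if ((1 : ZMod 3) * a 4 + (-(0+2)) * a 5 + (0*2+0+2) * a 6 : ZMod 3) ≠ 0 then 1 else 0) + ((if ((1 : ZMod 3) * a 5 + (-(0+2)) * a 6 : ZMod 3) ≠ 0 then 1 else 0) + ((if ((1 : ZMod 3) * a 6 : ZMod 3) ≠ 0 then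 1 else 0) + ((if (-((1 : ZMod 3) * a 0 + ((-(0+2)) * a 0 + (1 : ZMod 3) * a 1 + ((0*2+0+2) * a 0 + (-(0+2)) * a 1 + (1 : ZMod 3) * a 2 + ((-(0^2+2^2+2)) * a 0 + (0*2+0+2) * a 1 + (-(0+2)) * a 2 + (1 : ZMod 3) * a 3 + ((0*2+0+2) * a 0 + (-(0^2+2^2+2)) * a 1 + (0*2+0+2) * a 2 + (-(0+2)) * a 3 + (1 : ZMod 3) * a 4 + ((-(0+2)) * a 0 + (0*2+0+2) * a 1 + (-(0^2+2^2+2)) * a 2 + (0*2+0+2) * a 3 + (-(0+2)) * a 4 + (1 : ZMod 3) * a 5 + ((1 : ZMod 3) * a 0 + (-(0+2)) * a 1 + (0*2+0+2) * a 2 + (-(0^2+2^2+2)) * a 3 + (0*2+0+2) * a 4 + (-(0+2)) * a 5 + (1 : ZMod 3) * a 6 + ((1 : ZMod 3) * a 1 + (-(0+2)) * a 2 + (0*2+0+2) * a 3 + (-(0^2+2^2+2)) * a 4 + (0*2+0+2) * a 5 + (-(0+2)) * a 6 + ((1 : ZMod 3) * a 2 + (-(0+2)) * a 3 + (0*2+0+2)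 * a 4 + (-(0^2+2^2+2)) * a 5 + (0*2+0+2) * a 6 + ((1 : ZMod 3) * a 3 + (-(0+2)) * a 4 + (0*2+0+2) * a 5 + (-(0^2+2^2+2)) * a 6 + ((1 : ZMod 3) * a 4 + (-(0+2)) * a 5 + (0*2+0+2) * a 6 + ((1 : ZMod 3) * a 5 + (-(0+2)) * a 6 + ((1 : ZMod 3) * a 6 + 0))))))))))))) : ZMod 3) ≠ 0 then 1 else 0)))))))))))))) := by
  rw [wt2_eq]
  rfl

set_option maxRecDepth 1000000 in
set_option maxHeartbeats 4000000 in
theorem wdec12 : ∀ a0 a1 a2 a3 a4 a5 a6 : ZMod 3,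
    ((if ((1 : ZMod 3) * a0 : ZMod 3) ≠ 0 then 1 else 0) + ((if ((-(1+2)) * a0 + (1 : ZMod 3) * a1 : ZMod 3) ≠ 0 then 1 else 0) + ((if ((1*2+1+2) * a0 + (-(1+2)) * a1 + (1 : ZMod 3) * a2 : ZMod 3) ≠ 0 then 1 else 0) + ((if ((-(1^2+2^2+2)) * a0 + (1*2+1+2) * a1 + (-(1+2)) * a2 + (1 : ZMod 3) * a3 : ZMod 3) ≠ 0 then 1 else 0) + ((if ((1*2+1+2) * a0 + (-(1^2+2^2+2)) * a1 + (1*2+1+2) * a2 + (-(1+2)) * a3 + (1 : ZMod 3) * a4 : ZMod 3) ≠ 0 then 1 else 0) + ((if ((-(1+2)) * a0 + (1*2+1+2) * a1 + (-(1^2+2^2+2)) * a2 + (1*2+1+2) * a3 + (-(1+2)) * a4 + (1 : ZMod 3) * a5 : ZMod 3) ≠ 0 then 1 else 0) + ((if ((1 : ZMod 3) * a0 + (-(1+2)) * a1 + (1*2+1+2) * a2 + (-(1^2+2^2+2)) * a3 + (1*2+1+2) * a4 + (-(1+2)) * a5 + (1 : ZMod 3) * a6 : ZMod 3) ≠ 0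 then 1 else 0) + ((if ((1 : ZMod 3) * a1 + (-(1+2)) * a2 + (1*2+1+2) * a3 + (-(1^2+2^2+2)) * a4 + (1*2+1+2) * a5 + (-(1+2)) * a6 : ZMod 3) ≠ 0 then 1 else 0) + ((if ((1 : ZMod 3) * a2 + (-(1+2)) * a3 + (1*2+1+2) * a4 + (-(1^2+2^2+2)) * a5 + (1*2+1+2) * a6 : ZMod 3) ≠ 0 then 1 else 0) + ((if ((1 : ZMod 3) * a3 + (-(1+2)) * a4 + (1*2+1+2) * a5 + (-(1^2+2^2+2)) * a6 : ZMod 3) ≠ 0 then 1 else 0) + ((if ((1 : ZMod 3) * a4 + (-(1+2)) * a5 + (1*2+1+2) * a6 : ZMod 3) ≠ 0 then 1 else 0) + ((if ((1 : ZMod 3) * a5 + (-(1+2)) * a6 : ZMod 3) ≠ 0 then 1 else 0) + ((if ((1 : ZMod 3) * a6 : ZMod 3) ≠ 0 then 1 else 0) + ((if (-((1 : ZMod 3) * a0 + ((-(1+2)) * a0 + (1 : ZMod 3) * a1 + ((1*2+1+2) * a0 + (-(1+2)) * a1 + (1 : ZMod 3) * a2 + ((-(1^2+2^2+2)) * a0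 + (1*2+1+2) * a1 + (-(1+2)) * a2 + (1 : ZMod 3) * a3 + ((1*2+1+2) * a0 + (-(1^2+2^2+2)) * a1 + (1*2+1+2) * a2 + (-(1+2)) * a3 + (1 : ZMod 3) * a4 + ((-(1+2)) * a0 + (1*2+1+2) * a1 + (-(1^2+2^2+2)) * a2 + (1*2+1+2) * a3 + (-(1+2)) * a4 + (1 : ZMod 3) * a5 + ((1 : ZMod 3) * a0 + (-(1+2)) * a1 + (1*2+1+2) * a2 + (-(1^2+2^2+2)) * a3 + (1*2+1+2) * a4 + (-(1+2)) * a5 + (1 : ZMod 3) * a6 + ((1 : ZMod 3) * a1 + (-(1+2)) * a2 + (1*2+1+2) * a3 + (-(1^2+2^2+2)) * a4 + (1*2+1+2) * a5 + (-(1+2)) * a6 + ((1 : ZMod 3) * a2 + (-(1+2)) * a3 + (1*2+1+2) * a4 + (-(1^2+2^2+2)) * a5 + (1*2+1+2) * a6 + ((1 : ZMod 3) * a3 + (-(1+2)) * a4 + (1*2+1+2) * a5 + (-(1^2+2^2+2)) * a6 + ((1 : ZMod 3) * a4 + (-(1+2)) * a5 + (1*2+1+2) * a6 + ((1 : ZMod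 3) * a5 + (-(1+2)) * a6 + ((1 : ZMod 3) * a6 + 0))))))))))))) : ZMod 3) ≠ 0 then 1 else 0)))))))))))))) : ℕ) ∈ ({0,6,7,8,9,10,11,12,14} : Finset ℕ) := by decide

set_option maxRecDepth 1000000 in
set_option maxHeartbeats 4000000 in
theorem wdec02 : ∀ a0 a1 a2 a3 a4 a5 a6 : ZMod 3,
    ((if ((1 : ZMod 3) * a0 : ZMod 3) ≠ 0 then 1 else 0) + ((if ((-(0+2)) * a0 + (1 : ZMod 3) * a1 : ZMod 3) ≠ 0 then 1 else 0) + ((if ((0*2+0+2) * a0 + (-(0+2)) * a1 + (1 : ZMod 3) * a2 : ZMod 3) ≠ 0 then 1 else 0) + ((if ((-(0^2+2^2+2)) * a0 + (0*2+0+2) * a1 + (-(0+2)) * a2 + (1 : ZMod 3) * a3 : ZMod 3) ≠ 0 then 1 else 0) + ((if ((0*2+0+2) * a0 + (-(0^2+2^2+2)) * a1 + (0*2+0+2) * a2 + (-(0+2)) * a3 + (1 : ZMod 3) * a4 : ZMod 3) ≠ 0 then 1 else 0) + ((if ((-(0+2)) * a0 + (0*2+0+2) * a1 + (-(0^2+2^2+2))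 * a2 + (0*2+0+2) * a3 + (-(0+2)) * a4 + (1 : ZMod 3) * a5 : ZMod 3) ≠ 0 then 1 else 0) + ((if ((1 : ZMod 3) * a0 + (-(0+2)) * a1 + (0*2+0+2) * a2 + (-(0^2+2^2+2)) * a3 + (0*2+0+2) * a4 + (-(0+2)) * a5 + (1 : ZMod 3) * a6 : ZMod 3) ≠ 0 then 1 else 0) + ((if ((1 : ZMod 3) * a1 + (-(0+2)) * a2 + (0*2+0+2) * a3 + (-(0^2+2^2+2)) * a4 + (0*2+0+2) * a5 + (-(0+2)) * a6 : ZMod 3) ≠ 0 then 1 else 0) + ((if ((1 : ZMod 3) * a2 + (-(0+2)) * a3 + (0*2+0+2) * a4 + (-(0^2+2^2+2)) * a5 + (0*2+0+2) * a6 : ZMod 3) ≠ 0 then 1 else 0) + ((if ((1 : ZMod 3) * a3 + (-(0+2)) * a4 + (0*2+0+2) * a5 + (-(0^2+2^2+2)) * a6 : ZMod 3) ≠ 0 then 1 else 0) + ((if ((1 : ZMod 3) * a4 + (-(0+2)) * a5 + (0*2+0+2) * a6 : ZMod 3) ≠ 0 then 1 else 0) + ((if ((1 : ZMod 3) * a5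 + (-(0+2)) * a6 : ZMod 3) ≠ 0 then 1 else 0) + ((if ((1 : ZMod 3) * a6 : ZMod 3) ≠ 0 then 1 else 0) + ((if (-((1 : ZMod 3) * a0 + ((-(0+2)) * a0 + (1 : ZMod 3) * a1 + ((0*2+0+2) * a0 + (-(0+2)) * a1 + (1 : ZMod 3) * a2 + ((-(0^2+2^2+2)) * a0 + (0*2+0+2) * a1 + (-(0+2)) * a2 + (1 : ZMod 3) * a3 + ((0*2+0+2) * a0 + (-(0^2+2^2+2)) * a1 + (0*2+0+2) * a2 + (-(0+2)) * a3 + (1 : ZMod 3) * a4 + ((-(0+2)) * a0 + (0*2+0+2) * a1 + (-(0^2+2^2+2)) * a2 + (0*2+0+2) * a3 + (-(0+2)) * a4 + (1 : ZMod 3) * a5 + ((1 : ZMod 3) * a0 + (-(0+2)) * a1 + (0*2+0+2) * a2 + (-(0^2+2^2+2)) * a3 + (0*2+0+2) * a4 + (-(0+2)) * a5 + (1 : ZMod 3) * a6 + ((1 : ZMod 3) * a1 + (-(0+2)) * a2 + (0*2+0+2) * a3 + (-(0^2+2^2+2)) * a4 + (0*2+0+2) * a5 + (-(0+2)) * a6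 + ((1 : ZMod 3) * a2 + (-(0+2)) * a3 + (0*2+0+2) * a4 + (-(0^2+2^2+2)) * a5 + (0*2+0+2) * a6 + ((1 : ZMod 3) * a3 + (-(0+2)) * a4 + (0*2+0+2) * a5 + (-(0^2+2^2+2)) * a6 + ((1 : ZMod 3) * a4 + (-(0+2)) * a5 + (0*2+0+2) * a6 + ((1 : ZMod 3) * a5 + (-(0+2)) * a6 + ((1 : ZMod 3) * a6 + 0))))))))))))) : ZMod 3) ≠ 0 then 1 else 0)))))))))))))) : ℕ) ∈ ({0,6,7,8,9,10,11,12,14} : Finset ℕ) := by decide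

theorem cw_swap21 : cwVec 2 1 = cwVec 1 2 := rfl
theorem Fw_swap21 : FwVec 2 1 = FwVec 1 2 := rfl
theorem cw_swap20 : cwVec 2 0 = cwVec 0 2 := rfl
theorem Fw_swap20 : FwVec 2 0 = FwVec 0 2 := rfl

theorem wt_eq_wt2 (c : Fin 14 → ZMod 3) : wt c = wt2 c := by
  unfold wt wt2
  rw [Finset.filter_congr_decidable, Finset.card_filter]

def amapA (c : Fin 13 → ZMod 3) : Fin 7 → ZMod 3 := ![c 6 + c 8 + c 9 + 2 * c 10 + 2 * c 11, c 7 + c 9 + c 10 + 2 * c 11 + 2 * c 12, c 8 + c 10 + c 11 + 2 * c 12, c 9 + c 11 + c 12, c 10 + c 12, c 11, c 12]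
def rvecA (c : Fin 13 → ZMod 3) : Fin 6 → ZMod 3 := ![c 0 + 2 * c 6 + 2 * c 8 + 2 * c 9 + c 10 + c 11, c 1 + 2 * c 7 + 2 * c 9 + 2 * c 10 + c 11 + c 12, c 2 + c 6 + c 9 + c 10 + c 11 + c 12, c 3 + c 6 + c 7 + c 8 + c 9 + c 12, c 4 + c 6 + c 7 + 2 * c 8 + 2 * c 9 + 2 * c 11, c 5 + c 7 + c 8 + 2 * c 9 + 2 * c 10 + 2 * c 12]

theorem hdcA : ∀ (c : Fin 13 → ZMod 3) (pos : Fin 13),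
    c pos = cwVec 1 2 (amapA c) pos
      + (if h : (pos : ℕ) < 6 then rvecA c ⟨(pos : ℕ), h⟩ else 0) := by
  intro c pos
  fin_cases pos
  · show c 0 = (1 : ZMod 3) * (c 6 + c 8 + c 9 + 2 * c 10 + 2 * c 11) + (c 0 + 2 * c 6 + 2 * c 8 + 2 * c 9 + c 10 + c 11)
    linear_combination ((-1) * c 6 + (-1) * c 8 + (-1) * c 9 + (-1) * c 10 + (-1) * c 11) * h3Z
  · show c 1 = (-(1+2)) * (c 6 + c 8 + c 9 + 2 * c 10 + 2 * c 11) + (1 : ZMod 3) * (c 7 + c 9 + c 10 + 2 * c 11 + 2 * c 12) + (c 1 + 2 * c 7 + 2 * c 9 + 2 * c 10 + c 11 + c 12)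
    linear_combination ((1) * c 6 + (-1) * c 7 + (1) * c 8 + (1) * c 10 + (1) * c 11 + (-1) * c 12) * h3Z
  · show c 2 = (1*2+1+2) * (c 6 + c 8 + c 9 + 2 * c 10 + 2 * c 11) + (-(1+2)) * (c 7 + c 9 + c 10 + 2 * c 11 + 2 * c 12) + (1 : ZMod 3) * (c 8 + c 10 + c 11 + 2 * c 12) + (c 2 + c 6 + c 9 + c 10 + c 11 + c 12)
    linear_combination ((-2) * c 6 + (1) * c 7 + (-2) * c 8 + (-1) * c 9 + (-3) * c 10 + (-2) * c 11 + (1) * c 12) * h3Z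
  · show c 3 = (-(1^2+2^2+2)) * (c 6 + c 8 + c 9 + 2 * c 10 + 2 * c 11) + (1*2+1+2) * (c 7 + c 9 + c 10 + 2 * c 11 + 2 * c 12) + (-(1+2)) * (c 8 + c 10 + c 11 + 2 * c 12) + (1 : ZMod 3) * (c 9 + c 11 + c 12) + (c 3 + c 6 + c 7 + c 8 + c 9 + c 12)
    linear_combination ((2) * c 6 + (-2) * c 7 + (3) * c 8 + (4) * c 10 + (2) * c 11 + (-2) * c 12) * h3Z
  · show c 4 = (1*2+1+2) * (c 6 + c 8 + c 9 + 2 * c 10 + 2 * c 11) + (-(1^2+2^2+2)) * (c 7 + c 9 + c 10 + 2 * c 11 + 2 * c 12) + (1*2+1+2) * (c 8 + c 10 + c 11 + 2 * c 12) + (-(1+2)) * (c 9 + c 11 + c 12) + (1 : ZMod 3) * (c 10 + c 12) + (c 4 + c 6 + c 7 + 2 * c 8 + 2 * c 9 + 2 * c 11)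
    linear_combination ((-2) * c 6 + (2) * c 7 + (-4) * c 8 + (1) * c 9 + (-3) * c 10 + (2) * c 12) * h3Z
  · show c 5 = (-(1+2)) * (c 6 + c 8 + c 9 + 2 * c 10 + 2 * c 11) + (1*2+1+2) * (c 7 + c 9 + c 10 + 2 * c 11 + 2 * c 12) + (-(1^2+2^2+2)) * (c 8 + c 10 + c 11 + 2 * c 12) + (1*2+1+2) * (c 9 + c 11 + c 12) + (-(1+2)) * (c 10 + c 12) + (1 : ZMod 3) * (c 11) + (c 5 + c 7 + c 8 + 2 * c 9 + 2 * c 10 + 2 * c 12)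
    linear_combination ((1) * c 6 + (-2) * c 7 + (3) * c 8 + (-3) * c 9 + (3) * c 10 + (-1) * c 11) * h3Z
  · show c 6 = (1 : ZMod 3) * (c 6 + c 8 + c 9 + 2 * c 10 + 2 * c 11) + (-(1+2)) * (c 7 + c 9 + c 10 + 2 * c 11 + 2 * c 12) + (1*2+1+2) * (c 8 + c 10 + c 11 + 2 * c 12) + (-(1^2+2^2+2)) * (c 9 + c 11 + c 12) + (1*2+1+2) * (c 10 + c 12) + (-(1+2)) * (c 11) + (1 : ZMod 3) * (c 12) + 0
    linear_combination ((1) * c 7 + (-2) * c 8 + (3) * c 9 + (-3) * c 10 + (3) * c 11 + (-1) * c 12) * h3Z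
  · show c 7 = (1 : ZMod 3) * (c 7 + c 9 + c 10 + 2 * c 11 + 2 * c 12) + (-(1+2)) * (c 8 + c 10 + c 11 + 2 * c 12) + (1*2+1+2) * (c 9 + c 11 + c 12) + (-(1^2+2^2+2)) * (c 10 + c 12) + (1*2+1+2) * (c 11) + (-(1+2)) * (c 12) + 0
    linear_combination ((1) * c 8 + (-2) * c 9 + (3) * c 10 + (-3) * c 11 + (3) * c 12) * h3Z
  · show c 8 = (1 : ZMod 3) * (c 8 + c 10 + c 11 + 2 * c 12) + (-(1+2)) * (c 9 + c 11 + c 12) + (1*2+1+2) * (c 10 + c 12) + (-(1^2+2^2+2)) * (c 11) + (1*2+1+2) * (c 12) + 0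
    linear_combination ((1) * c 9 + (-2) * c 10 + (3) * c 11 + (-3) * c 12) * h3Z
  · show c 9 = (1 : ZMod 3) * (c 9 + c 11 + c 12) + (-(1+2)) * (c 10 + c 12) + (1*2+1+2) * (c 11) + (-(1^2+2^2+2)) * (c 12) + 0
    linear_combination ((1) * c 10 + (-2) * c 11 + (3) * c 12) * h3Z
  · show c 10 = (1 : ZMod 3) * (c 10 + c 12) + (-(1+2)) * (c 11) + (1*2+1+2) * (c 12) + 0
    linear_combination ((1) * c 11 + (-2) * c 12) * h3Z
  · show c 11 = (1 : ZMod 3) * (c 11) + (-(1+2)) * (c 12) + 0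
    linear_combination ((1) * c 12) * h3Z
  · show c 12 = (1 : ZMod 3) * (c 12) + 0
    ring

def amapB (c : Fin 13 → ZMod 3) : Fin 7 → ZMod 3 := ![c 6 + 2 * c 7 + 2 * c 8 + c 11 + c 12, c 7 + 2 * c 8 + 2 * c 9 + c 12, c 8 + 2 * c 9 + 2 * c 10, c 9 + 2 * c 10 + 2 * c 11, c 10 + 2 * c 11 + 2 * c 12, c 11 + 2 * c 12, c 12]
def rvecB (c : Fin 13 → ZMod 3) : Fin 6 → ZMod 3 := ![c 0 + 2 * c 6 + c 7 + c 8 + 2 * c 11 + 2 * c 12, c 1 + 2 * c 6 + 2 * c 8 + c 9 + 2 * c 11 + c 12, c 2 + c 6 + c 7 + 2 * c 8 + 2 * c 9 + c 10 + c 11, c 3 + c 7 + c 8 + 2 * c 9 + 2 * c 10 + c 11 + c 12, c 4 + c 6 + 2 * c 7 + c 9 + 2 * c 10 + 2 * c 12, c 5 + 2 * c 6 + 2 * c 7 + c 10 + c 11 + 2 * c 12]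

theorem hdcB : ∀ (c : Fin 13 → ZMod 3) (pos : Fin 13),
    c pos = cwVec 0 2 (amapB c) pos
      + (if h : (pos : ℕ) < 6 then rvecB c ⟨(pos : ℕ), h⟩ else 0) := by
  intro c pos
  fin_cases pos
  · show c 0 = (1 : ZMod 3) * (c 6 + 2 * c 7 + 2 * c 8 + c 11 + c 12) + (c 0 + 2 * c 6 + c 7 + c 8 + 2 * c 11 + 2 * c 12)
    linear_combination ((-1) * c 6 + (-1) * c 7 + (-1) * c 8 + (-1) * c 11 + (-1) * c 12) * h3Z
  · show c 1 = (-(0+2)) * (c 6 + 2 * c 7 + 2 * c 8 + c 11 + c 12) + (1 : ZMod 3) * (c 7 + 2 * c 8 + 2 * c 9 + c 12) + (c 1 + 2 * c 6 + 2 * c 8 + c 9 + 2 * c 11 + c 12)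
    linear_combination ((1) * c 7 + (-1) * c 9) * h3Z
  · show c 2 = (0*2+0+2) * (c 6 + 2 * c 7 + 2 * c 8 + c 11 + c 12) + (-(0+2)) * (c 7 + 2 * c 8 + 2 * c 9 + c 12) + (1 : ZMod 3) * (c 8 + 2 * c 9 + 2 * c 10) + (c 2 + c 6 + c 7 + 2 * c 8 + 2 * c 9 + c 10 + c 11)
    linear_combination ((-1) * c 6 + (-1) * c 7 + (-1) * c 8 + (-1) * c 10 + (-1) * c 11) * h3Z
  · show c 3 = (-(0^2+2^2+2)) * (c 6 + 2 * c 7 + 2 * c 8 + c 11 + c 12) + (0*2+0+2) * (c 7 + 2 * c 8 + 2 * c 9 + c 12) + (-(0+2)) * (c 8 + 2 * c 9 + 2 * c 10) + (1 : ZMod 3) * (c 9 + 2 * c 10 + 2 * c 11) + (c 3 + c 7 + c 8 + 2 * c 9 + 2 * c 10 + c 11 + c 12)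
    linear_combination ((2) * c 6 + (3) * c 7 + (3) * c 8 + (-1) * c 9 + (1) * c 11 + (1) * c 12) * h3Z
  · show c 4 = (0*2+0+2) * (c 6 + 2 * c 7 + 2 * c 8 + c 11 + c 12) + (-(0^2+2^2+2)) * (c 7 + 2 * c 8 + 2 * c 9 + c 12) + (0*2+0+2) * (c 8 + 2 * c 9 + 2 * c 10) + (-(0+2)) * (c 9 + 2 * c 10 + 2 * c 11) + (1 : ZMod 3) * (c 10 + 2 * c 11 + 2 * c 12) + (c 4 + c 6 + 2 * c 7 + c 9 + 2 * c 10 + 2 * c 12)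
    linear_combination ((-1) * c 6 + (2) * c 8 + (3) * c 9 + (-1) * c 10) * h3Z
  · show c 5 = (-(0+2)) * (c 6 + 2 * c 7 + 2 * c 8 + c 11 + c 12) + (0*2+0+2) * (c 7 + 2 * c 8 + 2 * c 9 + c 12) + (-(0^2+2^2+2)) * (c 8 + 2 * c 9 + 2 * c 10) + (0*2+0+2) * (c 9 + 2 * c 10 + 2 * c 11) + (-(0+2)) * (c 10 + 2 * c 11 + 2 * c 12) + (1 : ZMod 3) * (c 11 + 2 * c 12) + (c 5 + 2 * c 6 + 2 * c 7 + c 10 + c 11 + 2 * c 12)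
    linear_combination ((2) * c 8 + (2) * c 9 + (3) * c 10) * h3Z
  · show c 6 = (1 : ZMod 3) * (c 6 + 2 * c 7 + 2 * c 8 + c 11 + c 12) + (-(0+2)) * (c 7 + 2 * c 8 + 2 * c 9 + c 12) + (0*2+0+2) * (c 8 + 2 * c 9 + 2 * c 10) + (-(0^2+2^2+2)) * (c 9 + 2 * c 10 + 2 * c 11) + (0*2+0+2) * (c 10 + 2 * c 11 + 2 * c 12) + (-(0+2)) * (c 11 + 2 * c 12) + (1 : ZMod 3) * (c 12) + 0
    linear_combination ((2) * c 9 + (2) * c 10 + (3) * c 11) * h3Z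
  · show c 7 = (1 : ZMod 3) * (c 7 + 2 * c 8 + 2 * c 9 + c 12) + (-(0+2)) * (c 8 + 2 * c 9 + 2 * c 10) + (0*2+0+2) * (c 9 + 2 * c 10 + 2 * c 11) + (-(0^2+2^2+2)) * (c 10 + 2 * c 11 + 2 * c 12) + (0*2+0+2) * (c 11 + 2 * c 12) + (-(0+2)) * (c 12) + 0
    linear_combination ((2) * c 10 + (2) * c 11 + (3) * c 12) * h3Z
  · show c 8 = (1 : ZMod 3) * (c 8 + 2 * c 9 + 2 * c 10) + (-(0+2)) * (c 9 + 2 * c 10 + 2 * c 11) + (0*2+0+2) * (c 10 + 2 * c 11 + 2 * c 12) + (-(0^2+2^2+2)) * (c 11 + 2 * c 12) + (0*2+0+2) * (c 12) + 0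
    linear_combination ((2) * c 11 + (2) * c 12) * h3Z
  · show c 9 = (1 : ZMod 3) * (c 9 + 2 * c 10 + 2 * c 11) + (-(0+2)) * (c 10 + 2 * c 11 + 2 * c 12) + (0*2+0+2) * (c 11 + 2 * c 12) + (-(0^2+2^2+2)) * (c 12) + 0
    linear_combination ((2) * c 12) * h3Z
  · show c 10 = (1 : ZMod 3) * (c 10 + 2 * c 11 + 2 * c 12) + (-(0+2)) * (c 11 + 2 * c 12) + (0*2+0+2) * (c 12) + 0
    ring
  · show c 11 = (1 : ZMod 3) * (c 11 + 2 * c 12) + (-(0+2)) * (c 12) + 0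
    ring
  · show c 12 = (1 : ZMod 3) * (c 12) + 0
    ring

section Main
variable {K : Type} [Field K] [Algebra (ZMod 3) K] (α : K)

local notation "φ" => algebraMap (ZMod 3) K

theorem ev_one (s t : ZMod 3)
    (hm : α^3 - φ s * α^2 + φ t * α - 1 = 0) (a : Fin 7 → ZMod 3) :
    ∑ i : Fin 13, φ (cwVec s t a i) * α ^ (1 * (i:ℕ)) = 0 := by
  simp only [cwVec, Fin.sum_univ_succ, Finset.univ_eq_empty, Finset.sum_empty,
    Matrix.cons_val_zero, Matrix.cons_val_succ, map_add, map_mul, map_neg, map_one,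
    map_ofNat, map_pow, Fin.val_zero, Fin.val_succ]
  push_cast
  linear_combination ((φ (a 0) + φ (a 1)*α + φ (a 2)*α^2 + φ (a 3)*α^3 + φ (a 4)*α^4 + φ (a 5)*α^5 + φ (a 6)*α^6) * (α^3 - φ t * α^2 + φ s * α - 1)) * hm

theorem ev_four (s t : ZMod 3)
    (hm' : α^12 - φ t * α^8 + φ s * α^4 - 1 = 0) (a : Fin 7 → ZMod 3) :
    ∑ i : Fin 13, φ (cwVec s t a i) * α ^ (4 * (i:ℕ)) = 0 := by
  simp only [cwVec, Fin.sum_univ_succ, Finset.univ_eq_empty, Finset.sum_empty,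
    Matrix.cons_val_zero, Matrix.cons_val_succ, map_add, map_mul, map_neg, map_one,
    map_ofNat, map_pow, Fin.val_zero, Fin.val_succ]
  push_cast
  linear_combination ((φ (a 0) + φ (a 1)*α^4 + φ (a 2)*α^8 + φ (a 3)*α^12 + φ (a 4)*α^16 + φ (a 5)*α^20 + φ (a 6)*α^24) * (α^12 - φ s * α^8 + φ t * α^4 - 1)) * hm'

theorem char3 : (3 : K) = 0 := by
  have : ((3 : ZMod 3) : ZMod 3) = (0 : ZMod 3) := by decide
  calc (3 : K) = φ (3 : ZMod 3) := by rw [map_ofNat]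
  _ = 0 := by rw [show (3 : ZMod 3) = 0 by decide, map_zero]

theorem charP3 : CharP K 3 :=
  charP_of_injective_ringHom (algebraMap (ZMod 3) K).injective 3

theorem cube_sum {m : ℕ} (β : K) (r : Fin m → ZMod 3)
    (h : ∑ k : Fin m, φ (r k) * β ^ (k : ℕ) = 0) :
    ∑ k : Fin m, φ (r k) * (β ^ 3) ^ (k : ℕ) = 0 := by
  haveI : Fact (Nat.Prime 3) := ⟨by norm_num⟩
  haveI : CharP K 3 := charP3
  have h3 := congrArg (· ^ 3) h
  simp only [zero_pow, ne_eq, OfNat.ofNat_ne_zero, not_false_eq_true] at h3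
  rw [sum_pow_char] at h3
  calc ∑ k : Fin m, φ (r k) * (β ^ 3) ^ (k : ℕ)
      = ∑ k : Fin m, (φ (r k) * β ^ (k : ℕ)) ^ 3 := by
        apply Finset.sum_congr rfl
        intro k _
        rw [mul_pow, pow_right_comm, ← map_pow, ZMod.pow_card]
  _ = 0 := h3

theorem cube_sum' {m : ℕ} (β γ : K) (hβγ : β ^ 3 = γ) (r : Fin m → ZMod 3)
    (h : ∑ k : Fin m, φ (r k) * β ^ (k : ℕ) = 0) :
    ∑ k : Fin m, φ (r k) * γ ^ (k : ℕ) = 0 := by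
  rw [← hβγ]; exact cube_sum β r h

theorem qr3Mem_of (c : Fin 13 → ZMod 3) (h13 : α ^ 13 = 1)
    (h1 : ∑ i : Fin 13, φ (c i) * α ^ (1 * (i : ℕ)) = 0)
    (h4 : ∑ i : Fin 13, φ (c i) * α ^ (4 * (i : ℕ)) = 0) :
    qr3Mem α c := by
  have base : ∀ e : ℕ, ∑ i : Fin 13, φ (c i) * α ^ (e * (i:ℕ)) = ∑ i : Fin 13, φ (c i) * (α ^ e) ^ (i:ℕ) := by
    intro e
    exact Finset.sum_congr rfl fun i _ => by rw [pow_mul]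
  rw [base] at h1 h4
  have h3 := cube_sum' (α^1) (α^3) (by ring) c h1
  have h9 := cube_sum' (α^3) (α^9) (by ring) c h3
  have h12 := cube_sum' (α^4) (α^12) (by ring) c h4
  have h10 := cube_sum' (α^12) (α^10) (by linear_combination (α^10 * (α^13+1)) * h13) c h12
  intro ℓ hne hsq
  have hmem : ℓ = 1 ∨ ℓ = 3 ∨ ℓ = 4 ∨ ℓ = 9 ∨ ℓ = 10 ∨ ℓ = 12 := by
    revert hne hsq
    revert ℓ; decide
  rcases hmem with rfl | rfl | rfl | rfl | rfl | rfl
  · rw [show (1 : ZMod 13).val = 1 from rfl, base]; exact h1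
  · rw [show (3 : ZMod 13).val = 3 from rfl, base]; exact h3
  · rw [show (4 : ZMod 13).val = 4 from rfl, base]; exact h4
  · rw [show (9 : ZMod 13).val = 9 from rfl, base]; exact h9
  · rw [show (10 : ZMod 13).val = 10 from rfl, base]; exact h10
  · rw [show (12 : ZMod 13).val = 12 from rfl, base]; exact h12

theorem vsix (hα : IsPrimitiveRoot α 13) (r : Fin 6 → ZMod 3)
    (h1 : ∑ k : Fin 6, φ (r k) * (α^1)^(k:ℕ) = 0)
    (h3 : ∑ k : Fin 6, φ (r k) * (α^3)^(k:ℕ) = 0)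
    (h9 : ∑ k : Fin 6, φ (r k) * (α^9)^(k:ℕ) = 0)
    (h4 : ∑ k : Fin 6, φ (r k) * (α^4)^(k:ℕ) = 0)
    (h12 : ∑ k : Fin 6, φ (r k) * (α^12)^(k:ℕ) = 0)
    (h10 : ∑ k : Fin 6, φ (r k) * (α^10)^(k:ℕ) = 0) :
    ∀ k, r k = 0 := by
  have hmv : (Matrix.vandermonde ![α^1, α^3, α^9, α^4, α^12, α^10]).mulVec
      (fun k => φ (r k)) = 0 := by
    funext i
    show ∑ k : Fin 6, Matrix.vandermonde ![α^1, α^3, α^9, α^4, α^12, α^10] i k * φ (r k) = 0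
    simp only [Matrix.vandermonde_apply]
    fin_cases i <;>
      simp only [Matrix.cons_val_zero, Matrix.cons_val_succ, Matrix.cons_val_one,
        Matrix.head_cons, Fin.mk_zero, Fin.mk_one] <;>
      [skip; skip; skip; skip; skip; skip] <;>
      [simpa [mul_comm] using h1; simpa [mul_comm] using h3; simpa [mul_comm] using h9;
       simpa [mul_comm] using h4; simpa [mul_comm] using h12; simpa [mul_comm] using h10]
  have hne : ∀ (m n : ℕ), m < 13 → n < 13 → m ≠ n → α ^ n - α ^ m ≠ 0 :=
    fun m n hm hn hmn => sub_ne_zero.2 fun h => hmn (hα.pow_inj hm hn h.symm)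
  have hdet : (Matrix.vandermonde ![α^1, α^3, α^9, α^4, α^12, α^10]).det ≠ 0 := by
    rw [Matrix.det_vandermonde]
    apply Finset.prod_ne_zero_iff.2
    intro i _
    apply Finset.prod_ne_zero_iff.2
    intro j hj
    rw [Finset.mem_Ioi] at hj
    fin_cases i <;> fin_cases j <;>
      simp only [Matrix.cons_val_zero, Matrix.cons_val_succ, Matrix.cons_val_one,
        Matrix.head_cons, Fin.mk_zero, Fin.mk_one] <;>
      first
        | exact absurd hj (by decide)
        | exact hne _ _ (by norm_num) (by norm_num) (by norm_num)
  have hψ0 : (fun k => φ (r k)) = (0 : Fin 6 → K) := by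
    have hU : IsUnit (Matrix.vandermonde ![α^1, α^3, α^9, α^4, α^12, α^10]).det :=
      isUnit_iff_ne_zero.2 hdet
    calc (fun k => φ (r k))
        = Matrix.mulVec 1 (fun k => φ (r k)) := by rw [Matrix.one_mulVec]
      _ = Matrix.mulVec ((Matrix.vandermonde ![α^1, α^3, α^9, α^4, α^12, α^10])⁻¹ *
            Matrix.vandermonde ![α^1, α^3, α^9, α^4, α^12, α^10]) (fun k => φ (r k)) := by
          rw [Matrix.nonsing_inv_mul _ hU]
      _ = Matrix.mulVec (Matrix.vandermonde ![α^1, α^3, α^9, α^4, α^12, α^10])⁻¹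
            ((Matrix.vandermonde ![α^1, α^3, α^9, α^4, α^12, α^10]).mulVec
              (fun k => φ (r k))) := by rw [Matrix.mulVec_mulVec]
      _ = 0 := by rw [hmv, Matrix.mulVec_zero]
  intro k
  have : φ (r k) = φ 0 := by rw [map_zero]; exact congrFun hψ0 k
  exact (algebraMap (ZMod 3) K).injective this

theorem char3' : (3 : K) = 0 := by
  calc (3 : K) = φ (3 : ZMod 3) := by rw [map_ofNat]
  _ = 0 := by rw [show (3 : ZMod 3) = 0 by decide, map_zero]

theorem cube_root (x : K) (hx : x ^ 3 = x) : ∃ x₀ : ZMod 3, φ x₀ = x := by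
  have h' : x * (x - 1) * (x + 1) = 0 := by linear_combination hx
  rcases mul_eq_zero.1 h' with h'' | h''
  · rcases mul_eq_zero.1 h'' with h3 | h3
    · exact ⟨0, by rw [map_zero, h3]⟩
    · exact ⟨1, by rw [map_one, eq_comm, ← sub_eq_zero]; exact h3⟩
  · refine ⟨2, ?_⟩
    rw [show (2 : ZMod 3) = -1 by decide, map_neg, map_one]
    linear_combination -h''

theorem exists_st (hα : IsPrimitiveRoot α 13) :
    ∃ s t : ZMod 3,
      (α^3 - φ s * α^2 + φ t * α - 1 = 0) ∧
      (α^12 - φ t * α^8 + φ s * α^4 - 1 = 0) ∧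
      ((s = 1 ∧ t = 2) ∨ (s = 2 ∧ t = 1) ∨ (s = 0 ∧ t = 2) ∨ (s = 2 ∧ t = 0)) := by
  have h13 : α ^ 13 = 1 := hα.pow_eq_one
  have hne1 : α ≠ 1 := hα.ne_one (by norm_num)
  have h3K : (3 : K) = 0 := char3'
  have hphi : ∑ i ∈ Finset.range 13, α ^ i = 0 := by
    have hg := geom_sum_mul α 13
    rw [h13, sub_self] at hg
    rcases mul_eq_zero.1 hg with h | h
    · exact h
    · exact absurd (by linear_combination h : α = 1) hne1
  have hphi' : 1 + α + α^2 + α^3 + α^4 + α^5 + α^6 + α^7 + α^8 + α^9 + α^10 + α^11 + α^12 = 0 := by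
    have := hphi
    simp only [Finset.sum_range_succ, Finset.sum_range_zero, pow_zero, zero_add] at this
    linear_combination this
  have hm : α^3 - (α + α^3 + α^9) * α^2 + (α^4 + α^10 + α^12) * α - 1 = 0 := by
    linear_combination h13
  have hm' : α^12 - (α^4 + α^10 + α^12) * α^8 + (α + α^3 + α^9) * α^4 - 1 = 0 := by
    linear_combination ((1) + (-1)*α^5 + (-1)*α^7) * h13
  have hs3 : (α + α^3 + α^9) ^ 3 = α + α^3 + α^9 := by
    linear_combination ((2) + (1)*α^2 + (1)*α^5 + (1)*α^6 + (1)*α^7 + (1)*α^8 + (1)*α^11) * h3K + ((6) + (1)*α + (3)*α^2 + (3)*α^6 + (3)*α^8 + (1)*α^14) * h13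
  have ht3 : (α^4 + α^10 + α^12) ^ 3 = α^4 + α^10 + α^12 := by
    linear_combination ((2) + (1)*α^2 + (1)*α^5 + (1)*α^6 + (1)*α^7 + (1)*α^8 + (1)*α^11) * h3K + ((6) + (3)*α^2 + (1)*α^4 + (3)*α^5 + (3)*α^6 + (3)*α^7 + (3)*α^8 + (1)*α^10 + (3)*α^11 + (6)*α^13 + (3)*α^15 + (1)*α^17 + (3)*α^19 + (3)*α^21 + (1)*α^23) * h13
  have hst : (α + α^3 + α^9) * (α^4 + α^10 + α^12) + (α + α^3 + α^9) + (α^4 + α^10 + α^12) + 1 = 0 := by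
    linear_combination ((1)) * h3K + ((3) + (1)*α^2 + (1)*α^6 + (1)*α^8) * h13 + (1) * hphi'
  have heta : ((α + α^3 + α^9) + (α^4 + α^10 + α^12))^2 + ((α + α^3 + α^9) + (α^4 + α^10 + α^12)) = 0 := by
    linear_combination ((1)) * h3K + ((6) + (2)*α + (2)*α^2 + (2)*α^3 + (1)*α^5 + (2)*α^6 + (1)*α^7 + (2)*α^8 + (2)*α^9 + (1)*α^11) * h13 + (3) * hphi'
  obtain ⟨s₀, hs₀⟩ := cube_root (α + α^3 + α^9) hs3
  obtain ⟨t₀, ht₀⟩ := cube_root (α^4 + α^10 + α^12) ht3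
  have hinj := (algebraMap (ZMod 3) K).injective
  have hstz : s₀ * t₀ + s₀ + t₀ + 1 = 0 := by
    apply hinj
    simp only [map_add, map_mul, map_pow, map_one, map_zero, hs₀, ht₀]
    linear_combination hst
  have hetaz : (s₀ + t₀)^2 + (s₀ + t₀) = 0 := by
    apply hinj
    simp only [map_add, map_mul, map_pow, map_one, map_zero, hs₀, ht₀]
    linear_combination heta
  have hfour : ∀ x y : ZMod 3, x*y + x + y + 1 = 0 → (x+y)^2 + (x+y) = 0 →
      ((x = 1 ∧ y = 2) ∨ (x = 2 ∧ y = 1) ∨ (x = 0 ∧ y = 2) ∨ (x = 2 ∧ y = 0)) := by decide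
  exact ⟨s₀, t₀, by rw [hs₀, ht₀]; linear_combination hm,
    by rw [hs₀, ht₀]; linear_combination hm', hfour s₀ t₀ hstz hetaz⟩

theorem pad (g : Fin 6 → K) :
    ∑ i : Fin 13, (if h : (i:ℕ) < 6 then g ⟨(i:ℕ), h⟩ else 0) = ∑ k : Fin 6, g k := by
  simp [Fin.sum_univ_succ]

theorem lemD (hα : IsPrimitiveRoot α 13) (s t : ZMod 3)
    (hm : α^3 - φ s * α^2 + φ t * α - 1 = 0)
    (hm' : α^12 - φ t * α^8 + φ s * α^4 - 1 = 0)
    (amap : (Fin 13 → ZMod 3) → Fin 7 → ZMod 3) (rvec : (Fin 13 → ZMod 3) → Fin 6 → ZMod 3)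
    (hdc : ∀ (c : Fin 13 → ZMod 3) (pos : Fin 13),
        c pos = cwVec s t (amap c) pos
          + (if h : (pos : ℕ) < 6 then rvec c ⟨(pos : ℕ), h⟩ else 0))
    (c : Fin 13 → ZMod 3) (hc : qr3Mem α c) :
    c = cwVec s t (amap c) := by
  have h13 : α ^ 13 = 1 := hα.pow_eq_one
  have hc1 : ∑ i : Fin 13, φ (c i) * α ^ (1 * (i:ℕ)) = 0 := by
    have h := hc 1 (by decide) (by decide)
    rwa [show (1 : ZMod 13).val = 1 from rfl] at h
  have hc4 : ∑ i : Fin 13, φ (c i) * α ^ (4 * (i:ℕ)) = 0 := by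
    have h := hc 4 (by decide) (by decide)
    rwa [show (4 : ZMod 13).val = 4 from rfl] at h
  have hw1 := ev_one α s t hm (amap c)
  have hw4 := ev_four α s t hm' (amap c)
  have key : ∀ e : ℕ,
      (∑ i : Fin 13, φ (c i) * α ^ (e * (i:ℕ)) = 0) →
      (∑ i : Fin 13, φ (cwVec s t (amap c) i) * α ^ (e * (i:ℕ)) = 0) →
      ∑ k : Fin 6, φ (rvec c k) * (α ^ e) ^ (k:ℕ) = 0 := by
    intro e he hwe
    have hsub : ∑ i : Fin 13, φ (c i - cwVec s t (amap c) i) * α ^ (e * (i:ℕ)) = 0 := by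
      calc ∑ i : Fin 13, φ (c i - cwVec s t (amap c) i) * α ^ (e * (i:ℕ))
          = ∑ i : Fin 13, (φ (c i) * α ^ (e * (i:ℕ))
              - φ (cwVec s t (amap c) i) * α ^ (e * (i:ℕ))) :=
            Finset.sum_congr rfl fun i _ => by rw [map_sub, sub_mul]
        _ = 0 := by rw [Finset.sum_sub_distrib, he, hwe, sub_zero]
    have hd : ∀ pos : Fin 13, c pos - cwVec s t (amap c) pos
        = (if h : (pos : ℕ) < 6 then rvec c ⟨(pos : ℕ), h⟩ else 0) := fun pos => by
      rw [hdc c pos]; ring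
    simp only [hd] at hsub
    calc ∑ k : Fin 6, φ (rvec c k) * (α ^ e) ^ (k:ℕ)
        = ∑ i : Fin 13, (if h : (i:ℕ) < 6
            then φ (rvec c ⟨(i:ℕ), h⟩) * (α ^ e) ^ ((⟨(i:ℕ), h⟩ : Fin 6) : ℕ)
            else 0) := (pad _).symm
      _ = ∑ i : Fin 13, φ (if h : (i:ℕ) < 6 then rvec c ⟨(i:ℕ), h⟩ else 0)
            * α ^ (e * (i:ℕ)) := by
          refine Finset.sum_congr rfl fun i _ => ?_
          by_cases h : (i:ℕ) < 6
          · rw [dif_pos h, dif_pos h, ← pow_mul]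
          · rw [dif_neg h, dif_neg h, map_zero, zero_mul]
      _ = 0 := hsub
  have k1 := key 1 hc1 hw1
  have k4 := key 4 hc4 hw4
  have k1' : ∑ k : Fin 6, φ (rvec c k) * (α ^ 1) ^ (k:ℕ) = 0 := k1
  have k3 := cube_sum' (α^1) (α^3) (by ring) _ k1'
  have k9 := cube_sum' (α^3) (α^9) (by ring) _ k3
  have k12 := cube_sum' (α^4) (α^12) (by ring) _ k4
  have k10 := cube_sum' (α^12) (α^10) (by linear_combination (α^10 * (α^13+1)) * h13) _ k12
  have hr0 := vsix α hα (rvec c) k1' k3 k9 k4 k12 k10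
  funext pos
  rw [hdc c pos]
  split_ifs with hp
  · rw [show rvec c ⟨(pos : ℕ), hp⟩ = 0 from hr0 _, add_zero]
  · rw [add_zero]


set_option maxHeartbeats 1000000 in
theorem extEquiv (hα : IsPrimitiveRoot α 13) (s t : ZMod 3)
    (hm : α^3 - φ s * α^2 + φ t * α - 1 = 0)
    (hm' : α^12 - φ t * α^8 + φ s * α^4 - 1 = 0)
    (amap : (Fin 13 → ZMod 3) → Fin 7 → ZMod 3)
    (rvec : (Fin 13 → ZMod 3) → Fin 6 → ZMod 3)
    (hdc : ∀ (c : Fin 13 → ZMod 3) (pos : Fin 13),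
        c pos = cwVec s t (amap c) pos
          + (if h : (pos : ℕ) < 6 then rvec c ⟨(pos : ℕ), h⟩ else 0))
    (c : Fin 14 → ZMod 3) :
    extQR3Mem α c ↔ ∃ a, c = FwVec s t a := by
  have h13 : α ^ 13 = 1 := hα.pow_eq_one
  constructor
  · rintro ⟨hq, hl⟩
    have h1 := lemD α hα s t hm hm' amap rvec hdc (fun i => c i.castSucc) hq
    refine ⟨amap (fun i => c i.castSucc), ?_⟩
    funext i
    refine Fin.lastCases ?_ (fun j => ?_) i
    · have h2 : FwVec s t (amap fun i => c i.castSucc) (Fin.last 13)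
          = - ∑ i : Fin 13, cwVec s t (amap fun i => c i.castSucc) i := by
        simp [FwVec]
      rw [h2, hl]
      exact congrArg Neg.neg (Finset.sum_congr rfl fun j _ => congrFun h1 j)
    · have h2 : FwVec s t (amap fun i => c i.castSucc) (Fin.castSucc j)
          = cwVec s t (amap fun i => c i.castSucc) j := by
        simp [FwVec]
      rw [h2]
      exact congrFun h1 j
  · rintro ⟨a, rfl⟩
    have h3 : (fun i : Fin 13 => FwVec s t a i.castSucc) = cwVec s t a := by
      funext j; simp [FwVec]
    constructor
    · rw [h3]
      exact qr3Mem_of α _ h13 (ev_one α s t hm a) (ev_four α s t hm' a)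
    · show FwVec s t a (Fin.last 13) = _
      have h2 : FwVec s t a (Fin.last 13) = - ∑ i : Fin 13, cwVec s t a i := by simp [FwVec]
      rw [h2]
      exact congrArg Neg.neg (Finset.sum_congr rfl fun j _ => (congrFun h3 j).symm)

end Main

set_option maxRecDepth 1000000 in
set_option maxHeartbeats 4000000 in
/-- The set of weights of codewords of the extended ternary quadratic residue code of
length 14 is exactly `{0, 6, 7, 8, 9, 10, 11, 12, 14}`. -/
theorem ternary_weight_distribution (K : Type) [Field K] [Algebra (ZMod 3) K] (α : K)
    (hα : IsPrimitiveRoot α 13) :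
    {w : ℕ | ∃ c : Fin 14 → ZMod 3, extQR3Mem α c ∧ wt c = w} =
      ({0, 6, 7, 8, 9, 10, 11, 12, 14} : Set ℕ) := by
  obtain ⟨s₀, t₀, hm, hm', hp⟩ := exists_st α hα
  rcases hp with ⟨rfl, rfl⟩ | ⟨rfl, rfl⟩ | ⟨rfl, rfl⟩ | ⟨rfl, rfl⟩
  · have hdcX : ∀ (c : Fin 13 → ZMod 3) (pos : Fin 13),
        c pos = cwVec 1 2 (amapA c) pos
          + (if h : (pos : ℕ) < 6 then rvecA c ⟨(pos : ℕ), h⟩ else 0) := hdcA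
    have hEq : ∀ c : Fin 14 → ZMod 3, extQR3Mem α c ↔ ∃ a, c = FwVec 1 2 a :=
      fun c => extEquiv α hα 1 2 hm hm' _ _ hdcX c
    ext w
    simp only [Set.mem_setOf_eq, Set.mem_insert_iff, Set.mem_singleton_iff]
    constructor
    · rintro ⟨c, hc, rfl⟩
      obtain ⟨a, rfl⟩ := (hEq c).1 hc
      have h := wdec12 (a 0) (a 1) (a 2) (a 3) (a 4) (a 5) (a 6)
      rw [wt_eq_wt2, flat12]
      simpa using h
    · intro hw
      rcases hw with rfl|rfl|rfl|rfl|rfl|rfl|rfl|rfl|rfl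
      · exact ⟨FwVec 1 2 ![0,0,0,0,0,0,0], (hEq _).2 ⟨_, rfl⟩, by rw [wt_eq_wt2, flat12]; decide⟩
      · exact ⟨FwVec 1 2 ![0,0,0,0,0,0,1], (hEq _).2 ⟨_, rfl⟩, by rw [wt_eq_wt2, flat12]; decide⟩
      · exact ⟨FwVec 1 2 ![0,0,0,1,0,0,1], (hEq _).2 ⟨_, rfl⟩, by rw [wt_eq_wt2, flat12]; decide⟩
      · exact ⟨FwVec 1 2 ![0,0,0,1,0,0,2], (hEq _).2 ⟨_, rfl⟩, by rw [wt_eq_wt2, flat12]; decide⟩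
      · exact ⟨FwVec 1 2 ![0,0,0,0,0,1,1], (hEq _).2 ⟨_, rfl⟩, by rw [wt_eq_wt2, flat12]; decide⟩
      · exact ⟨FwVec 1 2 ![0,0,0,1,1,2,1], (hEq _).2 ⟨_, rfl⟩, by rw [wt_eq_wt2, flat12]; decide⟩
      · exact ⟨FwVec 1 2 ![0,0,1,1,0,1,2], (hEq _).2 ⟨_, rfl⟩, by rw [wt_eq_wt2, flat12]; decide⟩
      · exact ⟨FwVec 1 2 ![0,0,1,1,0,1,1], (hEq _).2 ⟨_, rfl⟩, by rw [wt_eq_wt2, flat12]; decide⟩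
      · exact ⟨FwVec 1 2 ![1,1,0,0,1,2,2], (hEq _).2 ⟨_, rfl⟩, by rw [wt_eq_wt2, flat12]; decide⟩
  · have hdcX : ∀ (c : Fin 13 → ZMod 3) (pos : Fin 13),
        c pos = cwVec 2 1 (amapA c) pos
          + (if h : (pos : ℕ) < 6 then rvecA c ⟨(pos : ℕ), h⟩ else 0) := fun c pos => hdcA c pos
    have hEq : ∀ c : Fin 14 → ZMod 3, extQR3Mem α c ↔ ∃ a, c = FwVec 1 2 a :=
      fun c => extEquiv α hα 2 1 hm hm' _ _ hdcX c
    ext w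
    simp only [Set.mem_setOf_eq, Set.mem_insert_iff, Set.mem_singleton_iff]
    constructor
    · rintro ⟨c, hc, rfl⟩
      obtain ⟨a, rfl⟩ := (hEq c).1 hc
      have h := wdec12 (a 0) (a 1) (a 2) (a 3) (a 4) (a 5) (a 6)
      rw [wt_eq_wt2, flat12]
      simpa using h
    · intro hw
      rcases hw with rfl|rfl|rfl|rfl|rfl|rfl|rfl|rfl|rfl
      · exact ⟨FwVec 1 2 ![0,0,0,0,0,0,0], (hEq _).2 ⟨_, rfl⟩, by rw [wt_eq_wt2, flat12]; decide⟩
      · exact ⟨FwVec 1 2 ![0,0,0,0,0,0,1], (hEq _).2 ⟨_, rfl⟩, by rw [wt_eq_wt2, flat12]; decide⟩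
      · exact ⟨FwVec 1 2 ![0,0,0,1,0,0,1], (hEq _).2 ⟨_, rfl⟩, by rw [wt_eq_wt2, flat12]; decide⟩
      · exact ⟨FwVec 1 2 ![0,0,0,1,0,0,2], (hEq _).2 ⟨_, rfl⟩, by rw [wt_eq_wt2, flat12]; decide⟩
      · exact ⟨FwVec 1 2 ![0,0,0,0,0,1,1], (hEq _).2 ⟨_, rfl⟩, by rw [wt_eq_wt2, flat12]; decide⟩
      · exact ⟨FwVec 1 2 ![0,0,0,1,1,2,1], (hEq _).2 ⟨_, rfl⟩, by rw [wt_eq_wt2, flat12]; decide⟩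
      · exact ⟨FwVec 1 2 ![0,0,1,1,0,1,2], (hEq _).2 ⟨_, rfl⟩, by rw [wt_eq_wt2, flat12]; decide⟩
      · exact ⟨FwVec 1 2 ![0,0,1,1,0,1,1], (hEq _).2 ⟨_, rfl⟩, by rw [wt_eq_wt2, flat12]; decide⟩
      · exact ⟨FwVec 1 2 ![1,1,0,0,1,2,2], (hEq _).2 ⟨_, rfl⟩, by rw [wt_eq_wt2, flat12]; decide⟩
  · have hdcX : ∀ (c : Fin 13 → ZMod 3) (pos : Fin 13),
        c pos = cwVec 0 2 (amapB c) pos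
          + (if h : (pos : ℕ) < 6 then rvecB c ⟨(pos : ℕ), h⟩ else 0) := hdcB
    have hEq : ∀ c : Fin 14 → ZMod 3, extQR3Mem α c ↔ ∃ a, c = FwVec 0 2 a :=
      fun c => extEquiv α hα 0 2 hm hm' _ _ hdcX c
    ext w
    simp only [Set.mem_setOf_eq, Set.mem_insert_iff, Set.mem_singleton_iff]
    constructor
    · rintro ⟨c, hc, rfl⟩
      obtain ⟨a, rfl⟩ := (hEq c).1 hc
      have h := wdec02 (a 0) (a 1) (a 2) (a 3) (a 4) (a 5) (a 6)
      rw [wt_eq_wt2, flat02]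
      simpa using h
    · intro hw
      rcases hw with rfl|rfl|rfl|rfl|rfl|rfl|rfl|rfl|rfl
      · exact ⟨FwVec 0 2 ![0,0,0,0,0,0,0], (hEq _).2 ⟨_, rfl⟩, by rw [wt_eq_wt2, flat02]; decide⟩
      · exact ⟨FwVec 0 2 ![0,0,0,0,0,1,2], (hEq _).2 ⟨_, rfl⟩, by rw [wt_eq_wt2, flat02]; decide⟩
      · exact ⟨FwVec 0 2 ![0,0,0,0,0,0,1], (hEq _).2 ⟨_, rfl⟩, by rw [wt_eq_wt2, flat02]; decide⟩
      · exact ⟨FwVec 0 2 ![0,0,0,0,1,0,1], (hEq _).2 ⟨_, rfl⟩, by rw [wt_eq_wt2, flat02]; decide⟩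
      · exact ⟨FwVec 0 2 ![0,0,0,1,0,0,1], (hEq _).2 ⟨_, rfl⟩, by rw [wt_eq_wt2, flat02]; decide⟩
      · exact ⟨FwVec 0 2 ![0,0,0,1,0,0,2], (hEq _).2 ⟨_, rfl⟩, by rw [wt_eq_wt2, flat02]; decide⟩
      · exact ⟨FwVec 0 2 ![0,0,0,1,1,1,1], (hEq _).2 ⟨_, rfl⟩, by rw [wt_eq_wt2, flat02]; decide⟩
      · exact ⟨FwVec 0 2 ![0,0,1,0,2,0,1], (hEq _).2 ⟨_, rfl⟩, by rw [wt_eq_wt2, flat02]; decide⟩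
      · exact ⟨FwVec 0 2 ![1,0,0,1,1,0,2], (hEq _).2 ⟨_, rfl⟩, by rw [wt_eq_wt2, flat02]; decide⟩
  · have hdcX : ∀ (c : Fin 13 → ZMod 3) (pos : Fin 13),
        c pos = cwVec 2 0 (amapB c) pos
          + (if h : (pos : ℕ) < 6 then rvecB c ⟨(pos : ℕ), h⟩ else 0) := fun c pos => hdcB c pos
    have hEq : ∀ c : Fin 14 → ZMod 3, extQR3Mem α c ↔ ∃ a, c = FwVec 0 2 a :=
      fun c => extEquiv α hα 2 0 hm hm' _ _ hdcX c
    ext w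
    simp only [Set.mem_setOf_eq, Set.mem_insert_iff, Set.mem_singleton_iff]
    constructor
    · rintro ⟨c, hc, rfl⟩
      obtain ⟨a, rfl⟩ := (hEq c).1 hc
      have h := wdec02 (a 0) (a 1) (a 2) (a 3) (a 4) (a 5) (a 6)
      rw [wt_eq_wt2, flat02]
      simpa using h
    · intro hw
      rcases hw with rfl|rfl|rfl|rfl|rfl|rfl|rfl|rfl|rfl
      · exact ⟨FwVec 0 2 ![0,0,0,0,0,0,0], (hEq _).2 ⟨_, rfl⟩, by rw [wt_eq_wt2, flat02]; decide⟩
      · exact ⟨FwVec 0 2 ![0,0,0,0,0,1,2], (hEq _).2 ⟨_, rfl⟩, by rw [wt_eq_wt2, flat02]; decide⟩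
      · exact ⟨FwVec 0 2 ![0,0,0,0,0,0,1], (hEq _).2 ⟨_, rfl⟩, by rw [wt_eq_wt2, flat02]; decide⟩
      · exact ⟨FwVec 0 2 ![0,0,0,0,1,0,1], (hEq _).2 ⟨_, rfl⟩, by rw [wt_eq_wt2, flat02]; decide⟩
      · exact ⟨FwVec 0 2 ![0,0,0,1,0,0,1], (hEq _).2 ⟨_, rfl⟩, by rw [wt_eq_wt2, flat02]; decide⟩
      · exact ⟨FwVec 0 2 ![0,0,0,1,0,0,2], (hEq _).2 ⟨_, rfl⟩, by rw [wt_eq_wt2, flat02]; decide⟩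
      · exact ⟨FwVec 0 2 ![0,0,0,1,1,1,1], (hEq _).2 ⟨_, rfl⟩, by rw [wt_eq_wt2, flat02]; decide⟩
      · exact ⟨FwVec 0 2 ![0,0,1,0,2,0,1], (hEq _).2 ⟨_, rfl⟩, by rw [wt_eq_wt2, flat02]; decide⟩
      · exact ⟨FwVec 0 2 ![1,0,0,1,1,0,2], (hEq _).2 ⟨_, rfl⟩, by rw [wt_eq_wt2, flat02]; decide⟩
end
end
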